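/- arXiv:1303.3083 — 7 statements merged into one kernel-verified Lean document; each statement's English description precedes it below -/
import Mathlib

section
/- Harary's Balance Theorem: A signed simple graph Σ = (Γ, σ) is balanced if and only if there is a bipartition of the vertex set V into two (possibly empty) sets X and Y such that an edge of Γ is negative precisely when it has one endpoint in X and one endpoint in Y. -/
open SimpleGraph

/-- A signed simple graph `(G, σ)` is balanced if every cycle is positive,
i.e., the product of the signs of its edges is `+1`. -/
def IsBalanced {V : Type*} (G : SimpleGraph V) (σ : Sym2 V → ℤ) : Prop :=
  ∀ ⦃v : V⦄ (w : G.Walk v v), w.IsCycle → (w.edges.map σ).prod = 1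

section Aux

variable {V : Type*} {G : SimpleGraph V} {σ : Sym2 V → ℤ}

private lemma list_prod_pm {l : List ℤ} (h : ∀ x ∈ l, x = 1 ∨ x = -1) :
    l.prod = 1 ∨ l.prod = -1 := by
  induction l with
  | nil => left; simp
  | cons a t ih =>
    rcases h a (by simp) with ha | ha <;>
      rcases ih (fun x hx => h x (by simp [hx])) with ht | ht <;>
        simp [ha, ht]

private lemma walk_sign_pm (hσ : ∀ e ∈ G.edgeSet, σ e = 1 ∨ σ e = -1)
    {u v : V} (p : G.Walk u v) : (p.edges.map σ).prod = 1 ∨ (p.edges.map σ).prod = -1 := by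
  refine list_prod_pm ?_
  intro x hx
  simp only [List.mem_map] at hx
  obtain ⟨e, he, rfl⟩ := hx
  exact hσ e (p.edges_subset_edgeSet he)

/-- In a path from `u` to `v`, the edge `s(v,u)` can only occur if the path has length 1. -/
private lemma path_mem_edge {u v : V} (p : G.Walk u v) (hp : p.IsPath)
    (he : s(v, u) ∈ p.edges) : p.length = 1 := by
  induction p with
  | nil => simp at he
  | @cons a x b h q ih =>
    rw [SimpleGraph.Walk.edges_cons, List.mem_cons] at he
    rw [SimpleGraph.Walk.cons_isPath_iff] at hp
    rcases he with he | he
    · rw [Sym2.eq_iff] at he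
      rcases he with ⟨h1, h2⟩ | ⟨h1, h2⟩
      · exact absurd (h2 ▸ h) (G.loopless.irrefl a)
      · subst h1
        rw [SimpleGraph.Walk.isPath_iff_eq_nil] at hp
        rw [hp.1]
        simp
    · exact absurd (SimpleGraph.Walk.snd_mem_support_of_mem_edges q he) hp.2

/-- Split a walk from `x` to `v`, in which `x` reappears after the start, into a
nontrivial closed walk at `x` followed by a walk from `x` to `v`. -/
private lemma split_at_dup {x v : V} (q : G.Walk x v) (hx : x ∈ q.support.tail) :
    ∃ (c : G.Walk x x) (d : G.Walk x v),
      q.edges = c.edges ++ d.edges ∧ q.length = c.length + d.length ∧ 0 < c.length := by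
  classical
  cases q with
  | nil => simp at hx
  | @cons _ y _ h'' r =>
    have hrx : x ∈ r.support := by simpa using hx
    refine ⟨SimpleGraph.Walk.cons h'' (r.takeUntil x hrx), r.dropUntil x hrx, ?_, ?_, ?_⟩
    · rw [SimpleGraph.Walk.edges_cons, SimpleGraph.Walk.edges_cons, List.cons_append]
      conv_lhs => rw [← r.take_spec hrx]
      rw [SimpleGraph.Walk.edges_append]
    · rw [SimpleGraph.Walk.length_cons, SimpleGraph.Walk.length_cons]
      conv_lhs => rw [← r.take_spec hrx]
      rw [SimpleGraph.Walk.length_append]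
      omega
    · rw [SimpleGraph.Walk.length_cons]; omega

/-- If all cycles are positive (and all edge signs are `±1`), then every closed walk
is positive. -/
private lemma closed_walk_sign (hσ : ∀ e ∈ G.edgeSet, σ e = 1 ∨ σ e = -1)
    (hbal : IsBalanced G σ) :
    ∀ (n : ℕ) ⦃v : V⦄ (w : G.Walk v v), w.length = n → (w.edges.map σ).prod = 1 := by
  classical
  intro n
  induction n using Nat.strong_induction_on with
  | _ n ih =>
    intro v w hlen
    cases w with
    | nil => simp
    | @cons _ u₀ _ h p =>
      by_cases hnd : p.support.Nodup
      · -- `p` is a path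
        have hp : p.IsPath := SimpleGraph.Walk.IsPath.mk' hnd
        by_cases hmem : s(v, u₀) ∈ p.edges
        · -- then p has length 1, closed walk of length 2
          have h1 : p.length = 1 := path_mem_edge p hp hmem
          cases p with
          | nil => simp at h1
          | @cons _ x _ h' q =>
            cases q with
            | nil =>
              -- w = v - u₀ - v
              simp only [SimpleGraph.Walk.edges_cons, SimpleGraph.Walk.edges_nil,
                List.map_cons, List.map_nil, List.prod_cons, List.prod_nil, mul_one]
              have hedge : s(u₀, v) = s(v, u₀) := Sym2.eq_swap
              rw [hedge]
              rcases hσ s(v, u₀) (G.mem_edgeSet.mpr h) with h2 | h2 <;> rw [h2] <;> norm_num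
            | cons h'' r => simp at h1
        · -- cycle
          have hc : (SimpleGraph.Walk.cons h p).IsCycle :=
            (SimpleGraph.Walk.cons_isCycle_iff p h).mpr ⟨hp, hmem⟩
          exact hbal _ hc
      · -- duplicate vertex in p.support; split off a shorter closed walk
        obtain ⟨x, hdup⟩ := List.exists_duplicate_iff_not_nodup.mpr hnd
        have hcount : 2 ≤ p.support.count x := List.duplicate_iff_two_le_count.mp hdup
        have hxmem : x ∈ p.support := hdup.mem
        have hcount1 : (p.takeUntil x hxmem).support.count x = 1 :=
          p.count_support_takeUntil_eq_one hxmem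
        have hqx : x ∈ (p.dropUntil x hxmem).support.tail := by
          have hsum : p.support.count x = (p.takeUntil x hxmem).support.count x
              + (p.dropUntil x hxmem).support.tail.count x := by
            conv_lhs => rw [← p.take_spec hxmem]
            rw [SimpleGraph.Walk.support_append, List.count_append]
          rw [hcount1] at hsum
          exact List.count_pos_iff.mp (by omega)
        obtain ⟨c, d, hE, hL, hpos⟩ := split_at_dup (p.dropUntil x hxmem) hqx
        have hpE : p.edges = (p.takeUntil x hxmem).edges ++ (c.edges ++ d.edges) := by
          conv_lhs => rw [← p.take_spec hxmem]
          rw [SimpleGraph.Walk.edges_append, hE]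
        have hpL : p.length = (p.takeUntil x hxmem).length + (c.length + d.length) := by
          conv_lhs => rw [← p.take_spec hxmem]
          rw [SimpleGraph.Walk.length_append, hL]
        have hn : p.length + 1 = n := by
          simpa using hlen
        set c2 : G.Walk v v := SimpleGraph.Walk.cons h ((p.takeUntil x hxmem).append d) with hc2
        have hlc1 : c.length < n := by omega
        have hlc2 : c2.length < n := by
          rw [hc2, SimpleGraph.Walk.length_cons, SimpleGraph.Walk.length_append]
          omega
        have e1 : (c.edges.map σ).prod = 1 := ih _ hlc1 c rfl
        have e2 : (c2.edges.map σ).prod = 1 := ih _ hlc2 c2 rfl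
        have hedges : ((SimpleGraph.Walk.cons h p).edges.map σ).prod
            = (c.edges.map σ).prod * (c2.edges.map σ).prod := by
          rw [hc2]
          simp only [SimpleGraph.Walk.edges_cons, hpE, SimpleGraph.Walk.edges_append,
            List.map_cons, List.map_append, List.prod_cons, List.prod_append]
          ring
        rw [hedges, e1, e2, mul_one]

end Aux

/-- Harary's Balance Theorem: a signed simple graph is balanced iff there is a bipartition
of the vertex set into `X` and its complement `Y` such that an edge is negative precisely
when it has one endpoint in `X` and one in `Y`. -/
theorem harary_balance_theorem {V : Type*} [Fintype V] (G : SimpleGraph V)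
    (σ : Sym2 V → ℤ) (hσ : ∀ e ∈ G.edgeSet, σ e = 1 ∨ σ e = -1) :
    IsBalanced G σ ↔
      ∃ X : Set V, ∀ v w : V, G.Adj v w →
        (σ s(v, w) = -1 ↔ ((v ∈ X ∧ w ∉ X) ∨ (v ∉ X ∧ w ∈ X))) := by
  classical
  constructor
  · intro hbal
    -- choose a root in each connected component and a walk from the root
    have hreach : ∀ v : V, G.Reachable (G.connectedComponentMk v).out v := by
      intro v
      exact SimpleGraph.ConnectedComponent.eq.mp (Quot.out_eq _)
    set f : V → ℤ := fun v => (((hreach v).some).edges.map σ).prod with hf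
    have hfpm : ∀ v, f v = 1 ∨ f v = -1 := fun v => walk_sign_pm hσ _
    have hroot : ∀ v w : V, G.Adj v w →
        (G.connectedComponentMk v).out = (G.connectedComponentMk w).out := by
      intro v w hvw
      rw [SimpleGraph.ConnectedComponent.eq.mpr hvw.reachable]
    have key : ∀ v w : V, G.Adj v w → σ s(v, w) = f v * f w := by
      intro v w hvw
      -- closed walk: root → v → w → root
      set pv := (hreach v).some with hpv
      set pw := (hreach w).some with hpw
      have hout := hroot v w hvw
      set C : G.Walk (G.connectedComponentMk v).out (G.connectedComponentMk v).out :=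
        pv.append (SimpleGraph.Walk.cons hvw (pw.reverse.copy rfl hout.symm)) with hC
      have hCsign : (C.edges.map σ).prod = 1 := closed_walk_sign hσ hbal C.length C rfl
      have hrev : (((pw.reverse.copy rfl hout.symm)).edges.map σ).prod = f w := by
        rw [SimpleGraph.Walk.edges_copy, SimpleGraph.Walk.edges_reverse, List.map_reverse,
          List.prod_reverse]
      rw [hC, SimpleGraph.Walk.edges_append, SimpleGraph.Walk.edges_cons, List.map_append,
        List.prod_append, List.map_cons, List.prod_cons, hrev] at hCsign
      have hCsign' : f v * (σ s(v, w) * f w) = 1 := hCsign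
      rcases hfpm v with h1 | h1 <;> rcases hfpm w with h2 | h2 <;>
        rw [h1, h2] at hCsign' ⊢ <;> linarith
    refine ⟨{v | f v = -1}, fun v w hvw => ?_⟩
    rw [key v w hvw]
    rcases hfpm v with h1 | h1 <;> rcases hfpm w with h2 | h2 <;>
      simp [Set.mem_setOf_eq, h1, h2]
  · rintro ⟨X, hX⟩
    intro v w hw
    -- sign along a walk telescopes
    set g : V → ℤ := fun v => if v ∈ X then -1 else 1 with hg
    have hgpm : ∀ v, g v * g v = 1 := by
      intro v; by_cases h : v ∈ X <;> simp [hg, h]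
    have hadj : ∀ a b : V, G.Adj a b → σ s(a, b) = g a * g b := by
      intro a b hab
      rcases hσ s(a, b) (G.mem_edgeSet.mpr hab) with h1 | h1
      · rw [h1]
        have := (hX a b hab).not
        rw [h1] at this
        have hnot : ¬((a ∈ X ∧ b ∉ X) ∨ (a ∉ X ∧ b ∈ X)) := by
          rw [← this]; norm_num
        by_cases ha : a ∈ X <;> by_cases hb : b ∈ X <;> simp [hg, ha, hb] <;> tauto
      · rw [h1]
        have := (hX a b hab).mp h1
        rcases this with ⟨ha, hb⟩ | ⟨ha, hb⟩ <;> simp [hg, ha, hb]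
    have htel : ∀ ⦃a b : V⦄ (p : G.Walk a b), (p.edges.map σ).prod = g a * g b := by
      intro a b p
      induction p with
      | nil => simp [hgpm]
      | @cons c d e hcd q ihq =>
        simp only [SimpleGraph.Walk.edges_cons, List.map_cons, List.prod_cons, ihq,
          hadj c d hcd]
        rw [show g c * g d * (g d * g e) = g c * (g d * g d) * g e by ring, hgpm d, mul_one]
    rw [htel w]
    exact hgpm v
end

section
/- Switching Equivalence Theorem: Two signed simple graphs Σ₁ = (Γ, σ₁) and Σ₂ = (Γ, σ₂) with the same underlying graph Γ are switching equivalent (i.e., there exists θ : V → {+1, −1} with σ₂(vw) = θ(v)σ₁(vw)θ(w) for every edge vw) if and only if they have the same class of positive cycles, i.e., for every cycle C of Γ the product of σ₁ over the edges of C equals the product of σ₂ over the edges of C. -/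
open SimpleGraph

private lemma listprod_pm {α : Type*} (f : α → ℤ) :
    ∀ (l : List α), (∀ e ∈ l, f e = 1 ∨ f e = -1) →
      (l.map f).prod = 1 ∨ (l.map f).prod = -1
  | [], _ => Or.inl rfl
  | a :: l, h => by
    have h1 := h a List.mem_cons_self
    have h2 := listprod_pm f l (fun e he => h e (List.mem_cons_of_mem _ he))
    simp only [List.map_cons, List.prod_cons]
    rcases h1 with h1 | h1 <;> rcases h2 with h2 | h2 <;> rw [h1, h2] <;> norm_num

private lemma edge_end_start_length {V : Type*} {G : SimpleGraph V} {v c : V}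
    (p : G.Walk c v) (hnd : p.support.Nodup) (hne : v ≠ c) (he : s(v, c) ∈ p.edges) :
    p.length = 1 := by
  cases p with
  | nil => simp at he
  | cons h' q =>
    rename_i b
    rw [Walk.support_cons, List.nodup_cons] at hnd
    rw [Walk.edges_cons, List.mem_cons] at he
    rcases he with he | he
    · rw [Sym2.eq_iff] at he
      have hb : v = b := by tauto
      subst hb
      have hq : q.IsPath := (Walk.isPath_def q).mpr hnd.2
      have : (⟨q, hq⟩ : G.Path v v) = Path.nil := SimpleGraph.Path.loop_eq _
      have hq' : q = Walk.nil := congrArg Subtype.val this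
      simp [hq']
    · exact absurd (Walk.snd_mem_support_of_mem_edges q he) hnd.1

private lemma closed_one {V : Type*} [DecidableEq V] {G : SimpleGraph V} (τ : Sym2 V → ℤ)
    (hτ : ∀ e ∈ G.edgeSet, τ e * τ e = 1)
    (hcyc : ∀ ⦃v : V⦄ (w : G.Walk v v), w.IsCycle → (w.edges.map τ).prod = 1) :
    ∀ (n : ℕ) ⦃v : V⦄ (w : G.Walk v v), w.length ≤ n → (w.edges.map τ).prod = 1 := by
  intro n
  induction n with
  | zero =>
    intro v w hw
    cases w with
    | nil => simp
    | cons h p => simp [Walk.length_cons] at hw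
  | succ n ih =>
    intro v w hw
    cases w with
    | nil => simp
    | cons h p =>
      rename_i c
      by_cases hnd : p.support.Nodup
      · by_cases hmem : s(v, c) ∈ p.edges
        · have hl := edge_end_start_length p hnd h.ne hmem
          cases p with
          | nil => simp at hl
          | cons h2 q =>
            cases q with
            | nil =>
              simp only [Walk.edges_cons, Walk.edges_nil, List.map_cons, List.map_nil,
                List.prod_cons, List.prod_nil, mul_one]
              rw [show s(c, v) = s(v, c) from Sym2.eq_swap]
              exact hτ _ (G.mem_edgeSet.mpr h)
            | cons h3 r => simp [Walk.length_cons] at hl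
        · exact hcyc _ ((Walk.cons_isCycle_iff p h).mpr ⟨(Walk.isPath_def p).mpr hnd, hmem⟩)
      · obtain ⟨u, hu⟩ := List.exists_duplicate_iff_not_nodup.mpr hnd
        have hcount : 2 ≤ p.support.count u := List.duplicate_iff_two_le_count.mp hu
        have hu1 : u ∈ p.support := hu.mem
        have hspec : (p.takeUntil u hu1).append (p.dropUntil u hu1) = p := p.take_spec hu1
        have hc1 : (p.takeUntil u hu1).support.count u = 1 :=
          p.count_support_takeUntil_eq_one hu1
        have hutail : u ∈ (p.dropUntil u hu1).support.tail := by
          have hs := congrArg Walk.support hspec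
          rw [Walk.support_append] at hs
          rw [← hs, List.count_append] at hcount
          by_contra hn
          rw [List.count_eq_zero_of_not_mem hn, hc1] at hcount
          omega
        have hqnil : ¬ (p.dropUntil u hu1).Nil := by
          intro hnil
          rw [Walk.nil_iff_length_eq] at hnil
          have h3 : (p.dropUntil u hu1).support.tail.length = (p.dropUntil u hu1).length := by
            rw [List.length_tail, Walk.length_support]; omega
          rw [hnil] at h3
          rw [List.eq_nil_of_length_eq_zero h3] at hutail
          simp at hutail
        obtain ⟨d, h2, r, hqe⟩ := Walk.not_nil_iff.mp hqnil
        have hur : u ∈ r.support := by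
          rw [hqe] at hutail; simpa using hutail
        have hspec2 : (r.takeUntil u hur).append (r.dropUntil u hur) = r := r.take_spec hur
        -- lengths
        have hplen : p.length ≤ n := by
          have := hw; rw [Walk.length_cons] at this; omega
        have hpl := congrArg Walk.length hspec
        rw [Walk.length_append] at hpl
        have hql : (p.dropUntil u hu1).length = r.length + 1 := by
          rw [hqe, Walk.length_cons]
        have l1 : (Walk.cons h2 (r.takeUntil u hur)).length ≤ n := by
          rw [Walk.length_cons]
          have := r.length_takeUntil_le hur
          omega
        have l2 : ((Walk.cons h (p.takeUntil u hu1)).append (r.dropUntil u hur)).length ≤ n := by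
          rw [Walk.length_append, Walk.length_cons]
          have := r.length_dropUntil_le hur
          omega
        have e1 := ih _ l1
        have e2 := ih _ l2
        have hedges : ((Walk.cons h p).edges.map τ).prod
            = ((Walk.cons h2 (r.takeUntil u hur)).edges.map τ).prod *
              (((Walk.cons h (p.takeUntil u hu1)).append (r.dropUntil u hur)).edges.map τ).prod := by
          conv_lhs => rw [← hspec, hqe, ← hspec2]
          simp only [Walk.edges_append, Walk.edges_cons, List.map_append, List.map_cons,
            List.prod_append, List.prod_cons]
          ring
        rw [hedges, e1, e2, mul_one]

private lemma walk_prod {V : Type*} {G : SimpleGraph V} (σ₁ σ₂ : Sym2 V → ℤ) (θ : V → ℤ)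
    (hθ : ∀ v, θ v * θ v = 1)
    (hsw : ∀ v w : V, G.Adj v w → σ₂ s(v, w) = θ v * σ₁ s(v, w) * θ w) :
    ∀ {u v : V} (p : G.Walk u v),
      (p.edges.map σ₂).prod = θ u * (p.edges.map σ₁).prod * θ v := by
  intro u v p
  induction p with
  | nil => simp only [Walk.edges_nil, List.map_nil, List.prod_nil]; linear_combination -hθ _
  | cons h' q ih =>
    rename_i a b w
    simp only [Walk.edges_cons, List.map_cons, List.prod_cons]
    rw [hsw _ _ h', ih]
    linear_combination (θ a * σ₁ s(a, b) * (q.edges.map σ₁).prod * θ w) * hθ b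

/-- Switching Equivalence Theorem: two signings `σ₁, σ₂` of the same graph `G` are
switching equivalent (there is `θ : V → {±1}` with `σ₂(vw) = θ(v)σ₁(vw)θ(w)` on every
edge) iff every cycle has the same sign in both, i.e., the product of `σ₁` over the
edges of any cycle equals the product of `σ₂` over them. -/
theorem switching_equivalence {V : Type*} [Fintype V] (G : SimpleGraph V)
    (σ₁ σ₂ : Sym2 V → ℤ)
    (h₁ : ∀ e ∈ G.edgeSet, σ₁ e = 1 ∨ σ₁ e = -1)
    (h₂ : ∀ e ∈ G.edgeSet, σ₂ e = 1 ∨ σ₂ e = -1) :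
    (∃ θ : V → ℤ, (∀ v, θ v = 1 ∨ θ v = -1) ∧
        ∀ v w : V, G.Adj v w → σ₂ s(v, w) = θ v * σ₁ s(v, w) * θ w) ↔
      ∀ ⦃v : V⦄ (w : G.Walk v v), w.IsCycle →
        (w.edges.map σ₁).prod = (w.edges.map σ₂).prod := by
  classical
  constructor
  · rintro ⟨θ, hθ, hsw⟩ v w _
    have hθ2 : ∀ x, θ x * θ x = 1 := by
      intro x; rcases hθ x with h | h <;> rw [h] <;> norm_num
    have hp := walk_prod σ₁ σ₂ θ hθ2 hsw w
    rw [hp]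
    linear_combination (-(w.edges.map σ₁).prod) * hθ2 v
  · intro hcyc
    set τ : Sym2 V → ℤ := fun e => σ₁ e * σ₂ e with hτdef
    have hτpm : ∀ e ∈ G.edgeSet, τ e = 1 ∨ τ e = -1 := by
      intro e he
      rcases h₁ e he with h | h <;> rcases h₂ e he with h' | h' <;>
        simp [hτdef, h, h']
    have hτ : ∀ e ∈ G.edgeSet, τ e * τ e = 1 := by
      intro e he; rcases hτpm e he with h | h <;> rw [h] <;> norm_num
    have hτcyc : ∀ ⦃v : V⦄ (w : G.Walk v v), w.IsCycle → (w.edges.map τ).prod = 1 := by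
      intro v w hwc
      have h12 := hcyc w hwc
      have hsplit : (w.edges.map τ).prod = (w.edges.map σ₁).prod * (w.edges.map σ₂).prod := by
        rw [hτdef]; exact List.prod_map_mul
      rw [hsplit, ← h12]
      rcases listprod_pm σ₁ w.edges (fun e he => h₁ e (w.edges_subset_edgeSet he)) with hp | hp <;>
        rw [hp] <;> norm_num
    have key := closed_one τ hτ hτcyc
    have hreach : ∀ v : V, G.Reachable ((G.connectedComponentMk v).out) v := by
      intro v
      exact ConnectedComponent.exact (Quot.out_eq _)
    refine ⟨fun v => (((hreach v).some).edges.map τ).prod, ?_, ?_⟩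
    · intro v
      exact listprod_pm τ _ (fun e he => hτpm e ((hreach v).some.edges_subset_edgeSet he))
    · intro v w hvw
      have hroot : (G.connectedComponentMk w).out = (G.connectedComponentMk v).out := by
        rw [ConnectedComponent.sound hvw.reachable.symm]
      have hW := key _ (((hreach v).some).append
        (Walk.cons hvw (((hreach w).some).reverse.copy rfl hroot))) le_rfl
      simp only [Walk.edges_append, Walk.edges_cons, Walk.edges_copy, Walk.edges_reverse,
        List.map_append, List.prod_append, List.map_cons, List.prod_cons, List.map_reverse,
        List.prod_reverse] at hW
      set a := (((hreach v).some).edges.map τ).prod with ha'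
      set b := (((hreach w).some).edges.map τ).prod with hb'
      have ha : a * a = 1 := by
        rcases listprod_pm τ _ (fun e he => hτpm e ((hreach v).some.edges_subset_edgeSet he))
          with h | h <;> rw [ha', h] <;> norm_num
      have hb : b * b = 1 := by
        rcases listprod_pm τ _ (fun e he => hτpm e ((hreach w).some.edges_subset_edgeSet he))
          with h | h <;> rw [hb', h] <;> norm_num
      have hs : σ₁ s(v, w) * σ₁ s(v, w) = 1 := by
        rcases h₁ _ (G.mem_edgeSet.mpr hvw) with h | h <;> rw [h] <;> norm_num
      have hW' : a * (σ₁ s(v, w) * σ₂ s(v, w) * b) = 1 := by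
        rw [hτdef] at hW; convert hW using 2
      linear_combination (a * σ₁ s(v, w) * b) * hW' -
        (σ₂ s(v, w) * σ₁ s(v, w) * σ₁ s(v, w) * b * b) * ha -
        (σ₂ s(v, w) * b * b) * hs - σ₂ s(v, w) * hb
end

section
/- Switching Isomorphism Corollary: Two signed simple graphs Σ₁ = (Γ₁, σ₁) and Σ₂ = (Γ₂, σ₂) are switching isomorphic (i.e., Σ₂ is isomorphic, as a signed graph, to some switching of Σ₁) if and only if there is a graph isomorphism φ : Γ₁ → Γ₂ that preserves the signs of cycles, i.e., for every cycle C of Γ₁ the σ₁-sign of C equals the σ₂-sign of the image cycle φ(C). -/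
open SimpleGraph

private lemma sw_list_prod_pm : ∀ (l : List ℤ), (∀ x ∈ l, x = 1 ∨ x = -1) →
    l.prod = 1 ∨ l.prod = -1 := by
  intro l
  induction l with
  | nil => simp
  | cons a t ih =>
    intro h
    rcases h a (by simp) with ha | ha <;>
      rcases ih (fun x hx => h x (by simp [hx])) with ht | ht <;> simp [ha, ht]

private lemma sw_path_edge {V : Type*} {G : SimpleGraph V} :
    ∀ {u v : V} (p : G.Walk u v), p.IsPath → s(v, u) ∈ p.edges → p.length = 1 := by
  intro u v p
  induction p with
  | nil => simp
  | @cons a z v h' q ih =>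
    intro hp he
    rw [SimpleGraph.Walk.edges_cons, List.mem_cons] at he
    rcases he with he | he
    · rw [Sym2.eq_iff] at he
      rcases he with ⟨hva, haz⟩ | ⟨hvz, -⟩
      · exact absurd haz h'.ne
      · subst hvz
        have hq : q.IsPath := ((SimpleGraph.Walk.cons_isPath_iff h' q).mp hp).1
        rw [SimpleGraph.Walk.isPath_iff_eq_nil] at hq
        subst hq
        simp
    · have hmem := q.snd_mem_support_of_mem_edges he
      exact absurd hmem ((SimpleGraph.Walk.cons_isPath_iff h' q).mp hp).2

private lemma sw_closed_walk {V₁ V₂ : Type*} {G₁ : SimpleGraph V₁} {G₂ : SimpleGraph V₂}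
    (σ₁ : Sym2 V₁ → ℤ) (σ₂ : Sym2 V₂ → ℤ)
    (h₁ : ∀ e ∈ G₁.edgeSet, σ₁ e = 1 ∨ σ₁ e = -1)
    (h₂ : ∀ e ∈ G₂.edgeSet, σ₂ e = 1 ∨ σ₂ e = -1)
    (φ : G₁ ≃g G₂)
    (hcyc : ∀ (v : V₁) (w : G₁.Walk v v), w.IsCycle →
      (w.edges.map σ₁).prod = ((w.map φ.toHom).edges.map σ₂).prod) :
    ∀ (n : ℕ) (v : V₁) (w : G₁.Walk v v), w.length = n →
      (w.edges.map σ₁).prod = ((w.map φ.toHom).edges.map σ₂).prod := by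
  classical
  intro n
  induction n using Nat.strong_induction_on with
  | _ n ih =>
  intro v w hlen
  by_cases hnd : w.support.tail.Nodup
  · cases w with
    | nil => simp
    | @cons _ u _ h p =>
      have hp : p.IsPath := SimpleGraph.Walk.IsPath.mk' (by simpa using hnd)
      by_cases he : s(v, u) ∈ p.edges
      · have hl := sw_path_edge p hp he
        cases p with
        | nil => simp at hl
        | @cons _ z _ h2 q =>
          cases q with
          | nil =>
            have ha : σ₁ s(v, u) * σ₁ s(v, u) = 1 := by
              rcases h₁ s(v, u) (by simpa using h) with h' | h' <;> rw [h'] <;> norm_num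
            have hb : σ₂ s(φ v, φ u) * σ₂ s(φ v, φ u) = 1 := by
              rcases h₂ s(φ v, φ u) (by simpa using φ.map_rel_iff.mpr h) with h' | h' <;>
                rw [h'] <;> norm_num
            rw [SimpleGraph.Walk.edges_map]
            simp only [SimpleGraph.Walk.edges_cons, SimpleGraph.Walk.edges_nil,
              List.map_cons, List.map_nil, List.prod_cons, List.prod_nil, mul_one,
              Sym2.map_pair_eq]
            rw [show s(u, v) = s(v, u) from Sym2.eq_swap]
            rw [show s(SimpleGraph.Iso.toHom φ u, SimpleGraph.Iso.toHom φ v)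
                = s(SimpleGraph.Iso.toHom φ v, SimpleGraph.Iso.toHom φ u) from Sym2.eq_swap]
            rw [ha]
            exact hb.symm
          | cons h3 r => simp at hl
      · exact hcyc v _ ((SimpleGraph.Walk.cons_isCycle_iff p h).mpr ⟨hp, he⟩)
  · obtain ⟨x, hdup⟩ := List.exists_duplicate_iff_not_nodup.mpr hnd
    have hcount : 2 ≤ w.support.tail.count x := List.duplicate_iff_two_le_count.mp hdup
    have hxs : x ∈ w.support := List.mem_of_mem_tail hdup.mem
    have hlenrot : (w.rotate x hxs).length = w.length := by
      have hle := (w.rotate_edges x hxs).perm.length_eq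
      rwa [SimpleGraph.Walk.length_edges, SimpleGraph.Walk.length_edges] at hle
    have hcount' : 2 ≤ (w.rotate x hxs).support.tail.count x := by
      rw [(SimpleGraph.Walk.support_rotate w x hxs).perm.count_eq x]
      exact hcount
    cases hrot : w.rotate x hxs with
    | nil => rw [hrot] at hcount'; simp at hcount'
    | @cons _ y _ hadj t =>
      rw [hrot] at hcount' hlenrot
      have hn : t.length + 1 = n := by
        rw [SimpleGraph.Walk.length_cons] at hlenrot
        omega
      simp only [SimpleGraph.Walk.support_cons, List.tail_cons] at hcount'
      have hxt : x ∈ t.support := by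
        have : 0 < t.support.count x := by omega
        exact List.count_pos_iff.mp this
      set tu := t.takeUntil x hxt with htu
      set du := t.dropUntil x hxt with hdu
      have hspec : tu.append du = t := t.take_spec hxt
      have hcnt1 : tu.support.count x = 1 := t.count_support_takeUntil_eq_one hxt
      have hdulen : 1 ≤ du.length := by
        have hsupp : t.support = tu.support ++ du.support.tail := by
          rw [← hspec, SimpleGraph.Walk.support_append]
        have : 1 ≤ du.support.tail.count x := by
          rw [hsupp, List.count_append] at hcount'
          omega
        have hmem : x ∈ du.support.tail := List.count_pos_iff.mp (by omega)
        have h0 : du.support.tail ≠ [] := List.ne_nil_of_mem hmem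
        have := SimpleGraph.Walk.length_support du
        rcases Nat.eq_zero_or_pos du.length with h' | h'
        · exfalso
          apply h0
          have : du.support.tail.length = 0 := by
            have := SimpleGraph.Walk.length_support du
            have hst : du.support.length = 1 := by omega
            simp [List.length_tail, hst]
          exact List.eq_nil_of_length_eq_zero this
        · omega
      have hlens : tu.length + du.length = t.length := by
        have := congrArg SimpleGraph.Walk.length hspec
        rwa [SimpleGraph.Walk.length_append] at this
      have hedges : (SimpleGraph.Walk.cons hadj tu).edges ++ du.edges
          = (SimpleGraph.Walk.cons hadj t).edges := by
        rw [SimpleGraph.Walk.edges_cons, SimpleGraph.Walk.edges_cons, ← hspec,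
          SimpleGraph.Walk.edges_append, List.cons_append]
      have hperm : ((SimpleGraph.Walk.cons hadj tu).edges ++ du.edges).Perm w.edges := by
        have hr := (w.rotate_edges x hxs).perm
        rw [hrot] at hr
        rw [hedges]
        exact hr
      have e₁ := ih (tu.length + 1) (by omega) x (SimpleGraph.Walk.cons hadj tu)
        (by simp [SimpleGraph.Walk.length_cons])
      have e₂ := ih du.length (by omega) x du rfl
      have key : ∀ g : Sym2 V₁ → ℤ, (w.edges.map g).prod =
          ((SimpleGraph.Walk.cons hadj tu).edges.map g).prod * (du.edges.map g).prod := by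
        intro g
        rw [← List.prod_append, ← List.map_append]
        exact ((hperm.map g).prod_eq).symm
      calc (w.edges.map σ₁).prod
          = ((SimpleGraph.Walk.cons hadj tu).edges.map σ₁).prod * (du.edges.map σ₁).prod :=
            key σ₁
        _ = (((SimpleGraph.Walk.cons hadj tu).map φ.toHom).edges.map σ₂).prod *
              ((du.map φ.toHom).edges.map σ₂).prod := by rw [e₁, e₂]
        _ = ((SimpleGraph.Walk.cons hadj tu).edges.map (σ₂ ∘ Sym2.map ⇑φ.toHom)).prod *
              (du.edges.map (σ₂ ∘ Sym2.map ⇑φ.toHom)).prod := by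
            rw [SimpleGraph.Walk.edges_map, SimpleGraph.Walk.edges_map, List.map_map,
              List.map_map]
        _ = (w.edges.map (σ₂ ∘ Sym2.map ⇑φ.toHom)).prod := (key _).symm
        _ = ((w.map φ.toHom).edges.map σ₂).prod := by
            rw [SimpleGraph.Walk.edges_map, List.map_map]

/-- Switching Isomorphism: two signed simple graphs `(G₁, σ₁)` and `(G₂, σ₂)` are
switching isomorphic (i.e., there is a graph isomorphism `φ : G₁ ≃g G₂` and a switching
function `θ : V₁ → {±1}` with `σ₂(φ(v)φ(w)) = θ(v)σ₁(vw)θ(w)` on every edge) iff there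
is a graph isomorphism `φ : G₁ ≃g G₂` preserving the signs of cycles: for every cycle
`w` of `G₁`, the `σ₁`-sign of `w` equals the `σ₂`-sign of the image cycle `φ(w)`. -/
theorem switching_isomorphism {V₁ V₂ : Type*} [Fintype V₁] [Fintype V₂]
    (G₁ : SimpleGraph V₁) (G₂ : SimpleGraph V₂)
    (σ₁ : Sym2 V₁ → ℤ) (σ₂ : Sym2 V₂ → ℤ)
    (h₁ : ∀ e ∈ G₁.edgeSet, σ₁ e = 1 ∨ σ₁ e = -1)
    (h₂ : ∀ e ∈ G₂.edgeSet, σ₂ e = 1 ∨ σ₂ e = -1) :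
    (∃ (φ : G₁ ≃g G₂) (θ : V₁ → ℤ), (∀ v, θ v = 1 ∨ θ v = -1) ∧
        ∀ v w : V₁, G₁.Adj v w → σ₂ s(φ v, φ w) = θ v * σ₁ s(v, w) * θ w) ↔
      ∃ φ : G₁ ≃g G₂, ∀ (v : V₁) (w : G₁.Walk v v), w.IsCycle →
        (w.edges.map σ₁).prod = ((w.map φ.toHom).edges.map σ₂).prod := by
  classical
  constructor
  · rintro ⟨φ, θ, hθ, hedge⟩
    refine ⟨φ, ?_⟩
    have hsq : ∀ v, θ v * θ v = 1 := fun v => by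
      rcases hθ v with h | h <;> rw [h] <;> norm_num
    have hwalk : ∀ (a b : V₁) (p : G₁.Walk a b),
        ((p.map φ.toHom).edges.map σ₂).prod = θ a * (p.edges.map σ₁).prod * θ b := by
      intro a b p
      induction p with
      | nil =>
        simp only [SimpleGraph.Walk.map_nil, SimpleGraph.Walk.edges_nil, List.map_nil,
          List.prod_nil, mul_one]
        exact (hsq _).symm
      | @cons a c b h q ihq =>
        simp only [SimpleGraph.Walk.map_cons, SimpleGraph.Walk.edges_cons, List.map_cons,
          List.prod_cons]
        have he2 : σ₂ s(φ.toHom a, φ.toHom c) = θ a * σ₁ s(a, c) * θ c := hedge a c h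
        rw [ihq, he2]
        linear_combination (θ a * σ₁ s(a, c) * (q.edges.map σ₁).prod * θ b) * hsq c
    intro v w _
    rw [hwalk v v w]
    linear_combination (-(w.edges.map σ₁).prod) * hsq v
  · rintro ⟨φ, hφ⟩
    have hB := sw_closed_walk σ₁ σ₂ h₁ h₂ φ hφ
    have hre : ∀ v : V₁, G₁.Reachable ((G₁.connectedComponentMk v).out) v := fun v =>
      SimpleGraph.ConnectedComponent.eq.mp ((G₁.connectedComponentMk v).out_eq)
    let p : ∀ v : V₁, G₁.Walk ((G₁.connectedComponentMk v).out) v := fun v => (hre v).some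
    have hpm₁ : ∀ v : V₁, ((p v).edges.map σ₁).prod = 1 ∨ ((p v).edges.map σ₁).prod = -1 := by
      intro v
      refine sw_list_prod_pm _ ?_
      intro x hx
      obtain ⟨e, he, rfl⟩ := List.mem_map.mp hx
      exact h₁ e ((p v).edges_subset_edgeSet he)
    have hpm₂ : ∀ v : V₁, (((p v).map φ.toHom).edges.map σ₂).prod = 1 ∨
        (((p v).map φ.toHom).edges.map σ₂).prod = -1 := by
      intro v
      refine sw_list_prod_pm _ ?_
      intro x hx
      obtain ⟨e, he, rfl⟩ := List.mem_map.mp hx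
      exact h₂ e (((p v).map φ.toHom).edges_subset_edgeSet he)
    refine ⟨φ, fun v => ((p v).edges.map σ₁).prod * (((p v).map φ.toHom).edges.map σ₂).prod,
      ?_, ?_⟩
    · intro v
      dsimp only
      rcases hpm₁ v with h | h <;> rcases hpm₂ v with h' | h' <;> rw [h, h'] <;> norm_num
    · intro v w hadj
      have hroot : (G₁.connectedComponentMk v).out = (G₁.connectedComponentMk w).out := by
        rw [SimpleGraph.ConnectedComponent.sound hadj.reachable]
      set C : G₁.Walk ((G₁.connectedComponentMk v).out) ((G₁.connectedComponentMk v).out) :=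
        ((p v).append (SimpleGraph.Walk.cons hadj ((p w).reverse))).copy rfl hroot.symm
        with hC
      have hCeq := hB C.length _ C rfl
      have hkey : ((p v).edges.map σ₁).prod * (σ₁ s(v, w) * ((p w).edges.map σ₁).prod)
          = (((p v).map φ.toHom).edges.map σ₂).prod *
            (σ₂ s(φ v, φ w) * (((p w).map φ.toHom).edges.map σ₂).prod) := by
        have hCe : C.edges = (p v).edges ++ (s(v, w) :: (p w).edges.reverse) := by
          rw [hC, SimpleGraph.Walk.edges_copy, SimpleGraph.Walk.edges_append,
            SimpleGraph.Walk.edges_cons, SimpleGraph.Walk.edges_reverse]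
        rw [SimpleGraph.Walk.edges_map, List.map_map] at hCeq
        rw [hCe] at hCeq
        simp only [List.map_append, List.map_cons, List.prod_append, List.prod_cons,
          List.map_reverse, List.prod_reverse, Function.comp_apply, Sym2.map_pair_eq]
          at hCeq
        rw [SimpleGraph.Walk.edges_map, List.map_map, SimpleGraph.Walk.edges_map,
          List.map_map]
        exact hCeq
      have ha' := hpm₂ v
      have hb' := hpm₂ w
      set a := ((p v).edges.map σ₁).prod
      set b := ((p w).edges.map σ₁).prod
      set a' := (((p v).map φ.toHom).edges.map σ₂).prod
      set b' := (((p w).map φ.toHom).edges.map σ₂).prod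
      have ha2 : a' * a' = 1 := by rcases ha' with h | h <;> rw [h] <;> norm_num
      have hb2 : b' * b' = 1 := by rcases hb' with h | h <;> rw [h] <;> norm_num
      linear_combination (-(a' * b')) * hkey - σ₂ s(φ v, φ w) * b' * b' * ha2
        - σ₂ s(φ v, φ w) * hb2
end

section
/- A class B of cycles of a finite simple graph Γ is the class of negative cycles of some signed graph (Γ, σ) if and only if every theta subgraph of Γ contains an even number of cycles belonging to B, i.e., for every theta subgraph, an even number (0 or 2) of its three cycles lie in B. -/
open SimpleGraph

attribute [local instance] Classical.propDecidable
set_option maxHeartbeats 2000000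

namespace NCaux

variable {V : Type*} {G : SimpleGraph V}

/-- indicator of membership in `B`. -/
noncomputable def ind (B : Set (Set (Sym2 V))) (C : Set (Sym2 V)) : ZMod 2 :=
  if C ∈ B then 1 else 0

/-- edge set of a walk. -/
def eset {u v : V} (w : G.Walk u v) : Set (Sym2 V) := {e | e ∈ w.edges}

/-- indicator function of the edge set of a walk. -/
noncomputable def chi {u v : V} (w : G.Walk u v) : Sym2 V → ZMod 2 :=
  fun e => if e ∈ w.edges then 1 else 0

lemma chi_eq_one_iff {u v : V} {w : G.Walk u v} {e : Sym2 V} :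
    chi w e = 1 ↔ e ∈ w.edges := by
  unfold chi; split <;> simp_all

lemma setOf_chi {u v : V} (w : G.Walk u v) : {e | chi w e = 1} = eset w := by
  ext e; simp [chi_eq_one_iff, eset]

lemma ind_eq_one_iff {B : Set (Set (Sym2 V))} {C : Set (Sym2 V)} :
    ind B C = 1 ↔ C ∈ B := by
  unfold ind; split <;> simp_all

/-- an edge of a path incident to its start vertex is its first edge. -/
lemma edge_incident_head {x y : V} {p : G.Walk x y} (hp : p.IsPath) {e : Sym2 V}
    (he : e ∈ p.edges) (hx : x ∈ e) :
    ∃ (c : V) (h : G.Adj x c) (t : G.Walk c y), p = Walk.cons h t ∧ e = s(x, c) ∧ e ∉ t.edges := by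
  cases p with
  | nil => simp at he
  | cons h t =>
    rename_i c
    rw [Walk.cons_isPath_iff] at hp
    rw [Walk.edges_cons, List.mem_cons] at he
    have hxt : x ∉ t.support := hp.2
    rcases he with he | he
    · subst he
      refine ⟨c, h, t, rfl, rfl, fun hmem => hxt ?_⟩
      exact Walk.fst_mem_support_of_mem_edges t hmem
    · exfalso
      obtain ⟨b, rfl⟩ := Sym2.mem_iff_exists.mp hx
      exact hxt (Walk.fst_mem_support_of_mem_edges t he)

/-- two internally disjoint distinct paths between the same endpoints are edge-disjoint. -/
lemma edge_disjoint {x y : V} {p q : G.Walk x y} (hxy : x ≠ y)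
    (hp : p.IsPath) (hq : q.IsPath) (hpq : p ≠ q)
    (hd : ∀ a, a ∈ p.support → a ∈ q.support → a = x ∨ a = y) :
    ∀ e, e ∈ p.edges → e ∈ q.edges → False := by
  intro e hep heq
  -- both endpoints of e are common vertices, hence e = s(x,y)
  have hxy' : e = s(x, y) := by
    induction e using Sym2.ind with
    | _ a b =>
      have ha : a = x ∨ a = y := hd a
        (Walk.fst_mem_support_of_mem_edges p hep) (Walk.fst_mem_support_of_mem_edges q heq)
      have hb : b = x ∨ b = y := hd b
        (Walk.snd_mem_support_of_mem_edges p hep) (Walk.snd_mem_support_of_mem_edges q heq)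
      have hab : a ≠ b := by
        intro h
        exact (G.not_isDiag_of_mem_edgeSet (p.edges_subset_edgeSet hep)) (by simp [h])
      rcases ha with rfl | rfl <;> rcases hb with rfl | rfl <;> first
        | exact absurd rfl hab
        | rw [Sym2.eq_swap]
        | rfl
  subst hxy'
  have hxe : x ∈ s(x, y) := by simp
  obtain ⟨c, h, t, rfl, hec, het⟩ := edge_incident_head hp hep hxe
  obtain ⟨c', h', t', rfl, hec', het'⟩ := edge_incident_head hq heq hxe
  have hc : c = y := by
    rcases Sym2.eq_iff.mp hec with ⟨-, h2⟩ | ⟨-, h2⟩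
    · exact h2.symm
    · exact absurd h2 (Ne.symm hxy)
  have hc' : c' = y := by
    rcases Sym2.eq_iff.mp hec' with ⟨-, h2⟩ | ⟨-, h2⟩
    · exact h2.symm
    · exact absurd h2 (Ne.symm hxy)
  subst hc hc'
  have ht : t = Walk.nil := (Walk.isPath_iff_eq_nil (p := t)).mp (Walk.cons_isPath_iff h t |>.mp hp).1
  have ht' : t' = Walk.nil := (Walk.isPath_iff_eq_nil (p := t')).mp (Walk.cons_isPath_iff h' t' |>.mp hq).1
  subst ht ht'
  exact hpq rfl

/-- two internally disjoint distinct paths between distinct endpoints form a cycle. -/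
lemma cycle_of_paths {x y : V} {p q : G.Walk x y} (hxy : x ≠ y)
    (hp : p.IsPath) (hq : q.IsPath) (hpq : p ≠ q)
    (hd : ∀ a, a ∈ p.support → a ∈ q.support → a = x ∨ a = y) :
    (p.append q.reverse).IsCycle := by
  rw [Walk.isCycle_def]
  refine ⟨?_, ?_, ?_⟩
  · -- trail
    rw [Walk.isTrail_def, Walk.edges_append, Walk.edges_reverse, List.nodup_append]
    refine ⟨hp.isTrail.edges_nodup, (List.nodup_reverse).mpr hq.isTrail.edges_nodup, ?_⟩
    rintro e hep _ heq rfl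
    exact edge_disjoint hxy hp hq hpq hd e hep (List.mem_reverse.mp heq)
  · -- nonempty
    intro hnil
    have : (p.append q.reverse).length = 0 := by rw [hnil]; rfl
    rw [Walk.length_append] at this
    have : p.length = 0 := by omega
    exact hxy (Walk.eq_of_length_eq_zero this)
  · -- support.tail nodup
    have hsup : (p.append q.reverse).support = p.support ++ q.reverse.support.tail :=
      Walk.support_append p q.reverse
    rw [hsup, Walk.support_eq_cons p, List.cons_append, List.tail_cons, List.nodup_append]
    refine ⟨(List.nodup_cons.mp (Walk.support_eq_cons p ▸ hp.support_nodup)).2, ?_, ?_⟩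
    · exact hq.reverse.support_nodup.sublist (List.tail_sublist _)
    · rintro a ha _ haq rfl
      have haq' : a ∈ q.reverse.support := List.mem_of_mem_tail haq
      have haq'' : a ∈ q.support := by rwa [Walk.support_reverse, List.mem_reverse] at haq'
      have hap : a ∈ p.support := by
        rw [Walk.support_eq_cons p]; exact List.mem_cons_of_mem _ ha
      rcases hd a hap haq'' with rfl | rfl
      · have := hp.support_nodup
        rw [Walk.support_eq_cons p, List.nodup_cons] at this
        exact this.1 ha
      · have := hq.reverse.support_nodup
        rw [Walk.support_eq_cons q.reverse, List.nodup_cons] at this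
        exact this.1 haq

lemma eset_cyc {x y : V} (p q : G.Walk x y) :
    eset (p.append q.reverse) = eset p ∪ eset q := by
  ext e; simp [eset, Walk.edges_append, Walk.edges_reverse]

lemma chi_add_self (f : Sym2 V → ZMod 2) : f + f = 0 := by
  funext e; exact CharTwo.add_self_eq_zero _

lemma zmod2_add_self (a : ZMod 2) : a + a = 0 := CharTwo.add_self_eq_zero _

/-- chi is additive over edge-disjoint appends. -/
lemma chi_append {x y z : V} {p : G.Walk x y} {q : G.Walk y z}
    (h : ∀ e, e ∈ p.edges → e ∈ q.edges → False) :
    chi (p.append q) = chi p + chi q := by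
  funext e
  simp only [chi, Walk.edges_append, List.mem_append, Pi.add_apply]
  by_cases hp : e ∈ p.edges <;> by_cases hq : e ∈ q.edges <;>
    first | (exact absurd hq (h e hp)) | simp [hp, hq]

lemma chi_reverse {x y : V} (p : G.Walk x y) : chi p.reverse = chi p := by
  funext e; simp [chi, Walk.edges_reverse]

/-- chi of the cycle formed by two internally disjoint paths. -/
lemma chi_cyc {x y : V} {p q : G.Walk x y} (hxy : x ≠ y)
    (hp : p.IsPath) (hq : q.IsPath) (hpq : p ≠ q)
    (hd : ∀ a, a ∈ p.support → a ∈ q.support → a = x ∨ a = y) :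
    chi (p.append q.reverse) = chi p + chi q := by
  rw [chi_append, chi_reverse]
  intro e hep heq
  rw [Walk.edges_reverse, List.mem_reverse] at heq
  exact edge_disjoint hxy hp hq hpq hd e hep heq

/-- splitting a path at an interior vertex. -/
lemma chi_take_drop {x y z : V} {p : G.Walk x y} (hp : p.IsPath) (hz : z ∈ p.support) :
    chi p = chi (p.takeUntil z hz) + chi (p.dropUntil z hz) := by
  classical
  conv_lhs => rw [← Walk.take_spec p hz]
  apply chi_append
  intro e h1 h2
  have := hp.isTrail.edges_nodup
  rw [← Walk.take_spec p hz, Walk.edges_append, List.nodup_append] at this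
  exact this.2.2 e h1 e h2 rfl

/-- the theta condition (RHS of the main theorem). -/
def ThetaCond (G : SimpleGraph V) (B : Set (Set (Sym2 V))) : Prop :=
  ∀ (u v : V), u ≠ v → ∀ (p₁ p₂ p₃ : G.Walk u v),
    p₁.IsPath → p₂.IsPath → p₃.IsPath →
    p₁ ≠ p₂ → p₁ ≠ p₃ → p₂ ≠ p₃ →
    (∀ x, x ∈ p₁.support → x ∈ p₂.support → x = u ∨ x = v) →
    (∀ x, x ∈ p₁.support → x ∈ p₃.support → x = u ∨ x = v) →
    (∀ x, x ∈ p₂.support → x ∈ p₃.support → x = u ∨ x = v) →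
    (({e | e ∈ (p₁.append p₂.reverse).edges} ∈ B ∧
        {e | e ∈ (p₂.append p₃.reverse).edges} ∈ B ∧
        {e | e ∈ (p₁.append p₃.reverse).edges} ∉ B) ∨
     ({e | e ∈ (p₁.append p₂.reverse).edges} ∈ B ∧
        {e | e ∈ (p₂.append p₃.reverse).edges} ∉ B ∧
        {e | e ∈ (p₁.append p₃.reverse).edges} ∈ B) ∨
     ({e | e ∈ (p₁.append p₂.reverse).edges} ∉ B ∧
        {e | e ∈ (p₂.append p₃.reverse).edges} ∈ B ∧
        {e | e ∈ (p₁.append p₃.reverse).edges} ∈ B) ∨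
     ({e | e ∈ (p₁.append p₂.reverse).edges} ∉ B ∧
        {e | e ∈ (p₂.append p₃.reverse).edges} ∉ B ∧
        {e | e ∈ (p₁.append p₃.reverse).edges} ∉ B))

lemma eset_def {x y : V} (p : G.Walk x y) : eset p = {e | e ∈ p.edges} := rfl

lemma theta_ind {B : Set (Set (Sym2 V))} (hT : ThetaCond G B) {u v : V} (huv : u ≠ v)
    {p₁ p₂ p₃ : G.Walk u v} (h1 : p₁.IsPath) (h2 : p₂.IsPath) (h3 : p₃.IsPath)
    (h12 : p₁ ≠ p₂) (h13 : p₁ ≠ p₃) (h23 : p₂ ≠ p₃)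
    (d12 : ∀ x, x ∈ p₁.support → x ∈ p₂.support → x = u ∨ x = v)
    (d13 : ∀ x, x ∈ p₁.support → x ∈ p₃.support → x = u ∨ x = v)
    (d23 : ∀ x, x ∈ p₂.support → x ∈ p₃.support → x = u ∨ x = v) :
    ind B (eset (p₁.append p₂.reverse)) + ind B (eset (p₂.append p₃.reverse)) +
      ind B (eset (p₁.append p₃.reverse)) = 0 := by
  have := hT u v huv p₁ p₂ p₃ h1 h2 h3 h12 h13 h23 d12 d13 d23
  rw [eset_def, eset_def, eset_def]
  unfold ind
  rcases this with ⟨a, b, c⟩ | ⟨a, b, c⟩ | ⟨a, b, c⟩ | ⟨a, b, c⟩ <;>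
    simp only [if_pos, if_neg, a, b, c, if_true, if_false] <;> decide

/-- splitting a cycle at one of its edges into that edge plus a path. -/
lemma cycle_split {u : V} {w : G.Walk u u} (hw : w.IsCycle) {e : Sym2 V}
    (he : e ∈ w.edges) :
    ∃ (x y : V) (h : G.Adj x y) (P : G.Walk x y), P.IsPath ∧ e = s(x, y) ∧ e ∉ P.edges ∧
      (∀ e', e' ∈ w.edges ↔ (e' = e ∨ e' ∈ P.edges)) := by
  classical
  induction e using Sym2.ind with
  | _ a b =>
  have hasup : a ∈ w.support := Walk.fst_mem_support_of_mem_edges w he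
  set w' : G.Walk a a := w.rotate a hasup with hw'def
  have hw' : w'.IsCycle := hw.rotate hasup
  have hperm : ∀ e', e' ∈ w'.edges ↔ e' ∈ w.edges :=
    fun e' => (Walk.rotate_edges w a hasup).mem_iff
  have he' : s(a, b) ∈ w'.edges := (hperm _).mpr he
  suffices h : ∃ (x y : V) (h : G.Adj x y) (P : G.Walk x y), P.IsPath ∧ s(a,b) = s(x, y) ∧
      s(a,b) ∉ P.edges ∧ (∀ e', e' ∈ w'.edges ↔ (e' = s(a,b) ∨ e' ∈ P.edges)) by
    obtain ⟨x, y, hxy, P, h1, h2, h3, h4⟩ := h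
    exact ⟨x, y, hxy, P, h1, h2, h3, fun e' => (hperm e').symm.trans (h4 e')⟩
  clear_value w'
  clear hperm he hw hw'def hasup
  cases w' with
  | nil => exact absurd rfl hw'.ne_nil
  | cons hadj t =>
    rename_i c
    rw [Walk.cons_isCycle_iff] at hw'
    obtain ⟨htp, hent⟩ := hw'
    rw [Walk.edges_cons, List.mem_cons] at he'
    by_cases hhead : s(a, b) = s(a, c)
    · -- e is the head edge
      have hbc : b = c := by
        rcases Sym2.eq_iff.mp hhead with ⟨-, h2⟩ | ⟨h1, h2⟩
        · exact h2
        · subst h1; exact h2.symm ▸ rfl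
      subst hbc
      refine ⟨a, b, hadj, t.reverse, htp.reverse, rfl, ?_, ?_⟩
      · rw [Walk.edges_reverse, List.mem_reverse]; exact hhead ▸ hent
      · intro e'
        rw [Walk.edges_cons, List.mem_cons, Walk.edges_reverse, List.mem_reverse]
    · -- e is inside t, incident to the endpoint a of t
      have het : s(a, b) ∈ t.edges := he'.resolve_left hhead
      have hetr : s(a, b) ∈ t.reverse.edges := by rw [Walk.edges_reverse, List.mem_reverse]; exact het
      have hamem : a ∈ s(a, b) := by simp
      obtain ⟨c'', h'', t'', heq, he2, he3⟩ := edge_incident_head htp.reverse hetr hamem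
      -- t.reverse = cons h'' t'',  t'' : Walk c'' c
      have hat'' : a ∉ t''.support := by
        have := htp.reverse.support_nodup
        rw [heq, Walk.support_cons, List.nodup_cons] at this
        exact this.1
      refine ⟨a, c'', h'', Walk.cons hadj t''.reverse, ?_, he2, ?_, ?_⟩
      · rw [Walk.cons_isPath_iff]
        refine ⟨(Walk.isPath_reverse_iff t'').mpr ?_, ?_⟩
        · have := htp.reverse
          rw [heq] at this
          exact (Walk.cons_isPath_iff _ _).mp this |>.1
        · rwa [Walk.support_reverse, List.mem_reverse]
      · rw [Walk.edges_cons, List.mem_cons]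
        rintro (h | h)
        · exact hhead h
        · rw [Walk.edges_reverse, List.mem_reverse] at h; exact he3 h
      · intro e'
        have htedges : ∀ e'', e'' ∈ t.edges ↔ (e'' = s(a,b) ∨ e'' ∈ t''.edges) := by
          intro e''
          rw [← List.mem_reverse, ← Walk.edges_reverse, heq, Walk.edges_cons, List.mem_cons, he2]
        rw [Walk.edges_cons, List.mem_cons, htedges, Walk.edges_cons, List.mem_cons,
          Walk.edges_reverse, List.mem_reverse]
        tauto

lemma eset_append {x y z : V} (p : G.Walk x y) (q : G.Walk y z) :
    eset (p.append q) = eset p ∪ eset q := by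
  ext e; simp [eset, Walk.edges_append]

lemma eset_reverse {x y : V} (p : G.Walk x y) : eset p.reverse = eset p := by
  ext e; simp [eset, Walk.edges_reverse]

/-- the type of edge-indicators of cycles of `G`. -/
abbrev R (G : SimpleGraph V) := {f : Sym2 V → ZMod 2 // ∃ (u : V) (w : G.Walk u u), w.IsCycle ∧ f = chi w}

noncomputable def size [Fintype V] (f : Sym2 V → ZMod 2) : ℕ :=
  (Finset.univ.filter (fun e => f e = 1)).card

lemma size_chi [Fintype V] {x y : V} {p : G.Walk x y} (hp : p.edges.Nodup) :
    size (chi p) = p.length := by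
  classical
  unfold size
  rw [← Walk.length_edges, ← List.toFinset_card_of_nodup hp]
  congr 1
  ext e
  simp [chi_eq_one_iff]

lemma multiset_sum_apply (M : Multiset (Sym2 V → ZMod 2)) (e : Sym2 V) :
    M.sum e = (M.map (fun f => f e)).sum := by
  induction M using Multiset.induction with
  | empty => rfl
  | cons f M ih => simp [ih]

lemma pair [Fintype V] {B : Set (Set (Sym2 V))} (hT : ThetaCond G B) :
    ∀ (n : ℕ) (x y : V), x ≠ y → ∀ (P Q S : G.Walk x y),
    P.IsPath → Q.IsPath → S.IsPath → P ≠ Q → P ≠ S → Q ≠ S →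
    (∀ a, a ∈ P.support → a ∈ S.support → a = x ∨ a = y) →
    (∀ a, a ∈ Q.support → a ∈ S.support → a = x ∨ a = y) →
    P.length + Q.length ≤ n →
    ∃ D : Multiset (R G),
      (D.map Subtype.val).sum = chi P + chi Q ∧
      (D.map (fun f => ind B {e | f.1 e = 1})).sum
        = ind B (eset (P.append S.reverse)) + ind B (eset (Q.append S.reverse)) ∧
      (D.map (fun f => size f.1)).sum ≤ P.length + Q.length := by
  classical
  intro n
  induction n with
  | zero =>
    intro x y hxy P Q S _ _ _ _ _ _ _ _ hn
    exact absurd (Walk.eq_of_length_eq_zero (by omega : P.length = 0)) hxy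
  | succ n ih =>
    intro x y hxy P Q S hP hQ hS hPQ hPS hQS dPS dQS hn
    by_cases hz : ∃ z, z ∈ Q.support ∧ z ∈ P.support ∧ z ≠ x ∧ z ≠ y
    · -- recursive case
      obtain ⟨z₀, hz₀⟩ := hz
      -- choose the LAST common internal vertex along Q
      set pred : V → Bool := fun a => decide (a ∈ P.support ∧ a ≠ x ∧ a ≠ y) with hpred
      set L : List V := Q.support.filter pred with hLdef
      have hz₀L : z₀ ∈ L := by
        rw [hLdef, List.mem_filter]
        exact ⟨hz₀.1, by simp [hpred, hz₀.2.1, hz₀.2.2.1, hz₀.2.2.2]⟩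
      have hL : L ≠ [] := List.ne_nil_of_mem hz₀L
      set z : V := L.getLast hL with hzdef
      have hzL : z ∈ L := List.getLast_mem hL
      have hzmem : z ∈ Q.support ∧ z ∈ P.support ∧ z ≠ x ∧ z ≠ y := by
        rw [hLdef, List.mem_filter, hpred] at hzL
        exact ⟨hzL.1, of_decide_eq_true hzL.2⟩
      obtain ⟨hzQ, hzP, hzx, hzy⟩ := hzmem
      set P₁ := P.takeUntil z hzP with hP₁def
      set P₂ := P.dropUntil z hzP with hP₂def
      set Q₁ := Q.takeUntil z hzQ with hQ₁def
      set Q₂ := Q.dropUntil z hzQ with hQ₂def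
      have hPspec : P₁.append P₂ = P := Walk.take_spec P hzP
      have hQspec : Q₁.append Q₂ = Q := Walk.take_spec Q hzQ
      have hP₁ : P₁.IsPath := hP.takeUntil hzP
      have hP₂ : P₂.IsPath := hP.dropUntil hzP
      have hQ₁ : Q₁.IsPath := hQ.takeUntil hzQ
      have hQ₂ : Q₂.IsPath := hQ.dropUntil hzQ
      have hPsup : P.support = P₁.support ++ P₂.support.tail := by
        conv_lhs => rw [← hPspec]
        exact Walk.support_append P₁ P₂
      have hQsup : Q.support = Q₁.support ++ Q₂.support.tail := by
        conv_lhs => rw [← hQspec]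
        exact Walk.support_append Q₁ Q₂
      have disjP : ∀ a, a ∈ P₁.support → a ∈ P₂.support.tail → False := by
        have := hP.support_nodup
        rw [hPsup, List.nodup_append] at this
        exact fun a h1 h2 => this.2.2 a h1 a h2 rfl
      have disjQ : ∀ a, a ∈ Q₁.support → a ∈ Q₂.support.tail → False := by
        have := hQ.support_nodup
        rw [hQsup, List.nodup_append] at this
        exact fun a h1 h2 => this.2.2 a h1 a h2 rfl
      -- z is the last common vertex: nothing after z on Q is an interior common vertex
      have hlast : ∀ a, a ∈ Q₂.support.tail → pred a = false := by
        intro a ha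
        by_contra hcon
        have ha' : pred a = true := by
          cases h : pred a
          · exact absurd h hcon
          · rfl
        have h2 : (Q₂.support.tail.filter pred) ≠ [] :=
          List.ne_nil_of_mem (List.mem_filter.mpr ⟨ha, ha'⟩)
        have hLsplit : L = Q₁.support.filter pred ++ Q₂.support.tail.filter pred := by
          rw [hLdef, hQsup, List.filter_append]
        have hsome : L.getLast? = some z := List.getLast?_eq_getLast hL
        rw [hLsplit, List.getLast?_append, List.getLast?_eq_getLast h2] at hsome
        have hzeq : (Q₂.support.tail.filter pred).getLast h2 = z := by
          have : (some ((Q₂.support.tail.filter pred).getLast h2)).or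
              ((Q₁.support.filter pred).getLast?) = some ((Q₂.support.tail.filter pred).getLast h2) := rfl
          rw [this] at hsome
          exact Option.some_inj.mp hsome
        have hzQ₂t : z ∈ Q₂.support.tail :=
          (List.mem_filter.mp (hzeq ▸ List.getLast_mem h2)).1
        exact disjQ z (Walk.end_mem_support Q₁) hzQ₂t
      have interiorQ₂ : ∀ a, a ∈ Q₂.support → a ≠ z → a ≠ y → a ∉ P.support := by
        intro a ha haz hay hap
        have hat : a ∈ Q₂.support.tail := by
          rw [Walk.support_eq_cons Q₂] at ha
          exact (List.mem_cons.mp ha).resolve_left haz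
        have hax : a ≠ x := by
          rintro rfl
          exact disjQ _ (Walk.start_mem_support Q₁) hat
        have := hlast a hat
        rw [hpred] at this
        simp only [decide_eq_false_iff_not] at this
        exact this ⟨hap, hax, hay⟩
      have hxQ₂ : x ∉ Q₂.support := by
        intro h
        rw [Walk.support_eq_cons Q₂] at h
        rcases List.mem_cons.mp h with h | h
        · exact hzx h.symm
        · exact disjQ x (Walk.start_mem_support Q₁) h
      have hxP₂ : x ∉ P₂.support := by
        intro h
        rw [Walk.support_eq_cons P₂] at h
        rcases List.mem_cons.mp h with h | h
        · exact hzx h.symm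
        · exact disjP x (Walk.start_mem_support P₁) h
      have hyQ₂t : y ∈ Q₂.support.tail := by
        have := Walk.end_mem_support Q₂
        rw [Walk.support_eq_cons Q₂] at this
        exact (List.mem_cons.mp this).resolve_left (Ne.symm hzy)
      have hyP₂t : y ∈ P₂.support.tail := by
        have := Walk.end_mem_support P₂
        rw [Walk.support_eq_cons P₂] at this
        exact (List.mem_cons.mp this).resolve_left (Ne.symm hzy)
      have hyQ₁ : y ∉ Q₁.support := fun h => disjQ y h hyQ₂t
      have hyP₁ : y ∉ P₁.support := fun h => disjP y h hyP₂t
      have junP : ∀ a, a ∈ P₁.support → a ∈ P₂.support → a = z := by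
        intro a h1 h2
        rw [Walk.support_eq_cons P₂] at h2
        rcases List.mem_cons.mp h2 with h2 | h2
        · exact h2
        · exact absurd h2 (fun h2 => disjP a h1 h2)
      have junQ : ∀ a, a ∈ Q₁.support → a ∈ Q₂.support → a = z := by
        intro a h1 h2
        rw [Walk.support_eq_cons Q₂] at h2
        rcases List.mem_cons.mp h2 with h2 | h2
        · exact h2
        · exact absurd h2 (fun h2 => disjQ a h1 h2)
      have hlP : P₁.length + P₂.length = P.length := by
        have := congrArg Walk.length hPspec
        rwa [Walk.length_append] at this
      have hlQ : Q₁.length + Q₂.length = Q.length := by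
        have := congrArg Walk.length hQspec
        rwa [Walk.length_append] at this
      have hP₂pos : 1 ≤ P₂.length := by
        rcases Nat.eq_zero_or_pos P₂.length with h | h
        · exact absurd (Walk.eq_of_length_eq_zero h) hzy
        · exact h
      have hQ₂pos : 1 ≤ Q₂.length := by
        rcases Nat.eq_zero_or_pos Q₂.length with h | h
        · exact absurd (Walk.eq_of_length_eq_zero h) hzy
        · exact h
      set T := S.append Q₂.reverse with hTdef
      have memQ₂rt : ∀ a, a ∈ Q₂.reverse.support.tail ↔ (a ∈ Q₂.support ∧ a ≠ y) := by
        intro a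
        constructor
        · intro h
          have h1 : a ∈ Q₂.reverse.support := List.mem_of_mem_tail h
          rw [Walk.support_reverse, List.mem_reverse] at h1
          refine ⟨h1, ?_⟩
          have h2 := hQ₂.reverse.support_nodup
          rw [Walk.support_eq_cons Q₂.reverse, List.nodup_cons] at h2
          rintro rfl
          exact h2.1 h
        · rintro ⟨h1, h2⟩
          have h3 : a ∈ Q₂.reverse.support := by
            rw [Walk.support_reverse, List.mem_reverse]; exact h1
          rw [Walk.support_eq_cons Q₂.reverse] at h3
          exact (List.mem_cons.mp h3).resolve_left h2
      have hTsup : T.support = S.support ++ Q₂.reverse.support.tail := Walk.support_append _ _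
      have memT : ∀ a, a ∈ T.support → a ∈ S.support ∨ (a ∈ Q₂.support ∧ a ≠ y) := by
        intro a h
        rw [hTsup, List.mem_append] at h
        exact h.imp id (memQ₂rt a).mp
      have hTp : T.IsPath := by
        apply Walk.IsPath.mk'
        rw [hTsup, List.nodup_append]
        refine ⟨hS.support_nodup, hQ₂.reverse.support_nodup.sublist (List.tail_sublist _), ?_⟩
        rintro a haS _ haQ rfl
        rw [memQ₂rt] at haQ
        obtain ⟨h1, h2⟩ := haQ
        rcases dQS a (Walk.support_dropUntil_subset Q hzQ h1) haS with rfl | rfl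
        · exact hxQ₂ h1
        · exact h2 rfl
      have hyT : y ∈ T.support := by
        rw [hTsup, List.mem_append]; exact Or.inl (Walk.end_mem_support S)
      have hzxne : x ≠ z := fun h => hzx h.symm
      have hPT : P₁ ≠ T := by intro h; rw [← h] at hyT; exact hyP₁ hyT
      have hQT : Q₁ ≠ T := by intro h; rw [← h] at hyT; exact hyQ₁ hyT
      have dPT : ∀ a, a ∈ P₁.support → a ∈ T.support → a = x ∨ a = z := by
        intro a h1 h2
        rcases memT a h2 with h2 | ⟨h2, hay⟩
        · rcases dPS a (Walk.support_takeUntil_subset P hzP h1) h2 with rfl | rfl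
          · exact Or.inl rfl
          · exact absurd h1 hyP₁
        · by_cases haz : a = z
          · exact Or.inr haz
          · exact absurd (Walk.support_takeUntil_subset P hzP h1) (interiorQ₂ a h2 haz hay)
      have dQT : ∀ a, a ∈ Q₁.support → a ∈ T.support → a = x ∨ a = z := by
        intro a h1 h2
        rcases memT a h2 with h2 | ⟨h2, hay⟩
        · rcases dQS a (Walk.support_takeUntil_subset Q hzQ h1) h2 with rfl | rfl
          · exact Or.inl rfl
          · exact absurd h1 hyQ₁
        · exact Or.inr (junQ a h1 h2)
      have hrecbound : P₁.length + Q₁.length ≤ n := by omega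
      have chiP : chi P = chi P₁ + chi P₂ := chi_take_drop hP hzP
      have chiQ : chi Q = chi Q₁ + chi Q₂ := chi_take_drop hQ hzQ
      have esP : eset P = eset P₁ ∪ eset P₂ := by
        conv_lhs => rw [← hPspec]
        exact eset_append _ _
      have esQ : eset Q = eset Q₁ ∪ eset Q₂ := by
        conv_lhs => rw [← hQspec]
        exact eset_append _ _
      have esT : eset T = eset S ∪ eset Q₂ := by
        rw [hTdef, eset_append, eset_reverse]
      have EQ3 : eset (Q₁.append T.reverse) = eset (Q.append S.reverse) := by
        rw [eset_cyc, eset_cyc, esT, esQ]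
        ext e; simp only [Set.mem_union]; tauto
      by_cases hc2 : P₂ = Q₂
      · -- pure recursion, no theta needed
        have hc1 : P₁ ≠ Q₁ := by
          intro h; apply hPQ; rw [← hPspec, ← hQspec, h, hc2]
        obtain ⟨D, hval, hind, hsize⟩ :=
          ih x z hzxne P₁ Q₁ T hP₁ hQ₁ hTp hc1 hPT hQT dPT dQT hrecbound
        have EQ4 : eset (P₁.append T.reverse) = eset (P.append S.reverse) := by
          rw [eset_cyc, eset_cyc, esT, esP, hc2]
          ext e; simp only [Set.mem_union]; tauto
        refine ⟨D, ?_, ?_, ?_⟩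
        · rw [hval, chiP, chiQ, hc2]
          funext e
          simp only [Pi.add_apply]
          have key : ∀ a b c : ZMod 2, a + b = (a + c) + (b + c) := by decide
          exact key _ _ _
        · rw [hind, EQ4, EQ3]
        · omega
      · -- theta at (z, y) with paths P₂, Q₂, R' = P₁.reverse.append S
        set R' := P₁.reverse.append S with hRdef
        have hRsup : R'.support = P₁.reverse.support ++ S.support.tail := Walk.support_append _ _
        have memStail : ∀ a, a ∈ S.support.tail ↔ (a ∈ S.support ∧ a ≠ x) := by
          intro a
          constructor
          · intro h
            refine ⟨List.mem_of_mem_tail h, ?_⟩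
            have h2 := hS.support_nodup
            rw [Walk.support_eq_cons S, List.nodup_cons] at h2
            rintro rfl
            exact h2.1 h
          · rintro ⟨h1, h2⟩
            rw [Walk.support_eq_cons S] at h1
            exact (List.mem_cons.mp h1).resolve_left h2
        have memR : ∀ a, a ∈ R'.support → a ∈ P₁.support ∨ (a ∈ S.support ∧ a ≠ x) := by
          intro a h
          rw [hRsup, List.mem_append] at h
          rcases h with h | h
          · left; rwa [Walk.support_reverse, List.mem_reverse] at h
          · right; exact (memStail a).mp h
        have hRp : R'.IsPath := by
          apply Walk.IsPath.mk'
          rw [hRsup, List.nodup_append]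
          refine ⟨hP₁.reverse.support_nodup, hS.support_nodup.sublist (List.tail_sublist _), ?_⟩
          rintro a haP _ haS rfl
          rw [Walk.support_reverse, List.mem_reverse] at haP
          obtain ⟨h1, h2⟩ := (memStail a).mp haS
          rcases dPS a (Walk.support_takeUntil_subset P hzP haP) h1 with rfl | rfl
          · exact h2 rfl
          · exact hyP₁ haP
        have hxR : x ∈ R'.support := by
          rw [hRsup, List.mem_append]
          left
          rw [Walk.support_reverse, List.mem_reverse]
          exact Walk.start_mem_support P₁
        have dPQ₂ : ∀ a, a ∈ P₂.support → a ∈ Q₂.support → a = z ∨ a = y := by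
          intro a h1 h2
          by_cases haz : a = z
          · exact Or.inl haz
          by_cases hay : a = y
          · exact Or.inr hay
          exact absurd (Walk.support_dropUntil_subset P hzP h1) (interiorQ₂ a h2 haz hay)
        have dP₂R : ∀ a, a ∈ P₂.support → a ∈ R'.support → a = z ∨ a = y := by
          intro a h1 h2
          rcases memR a h2 with h2 | ⟨h2, hax⟩
          · exact Or.inl (junP a h2 h1)
          · rcases dPS a (Walk.support_dropUntil_subset P hzP h1) h2 with rfl | rfl
            · exact absurd rfl hax
            · exact Or.inr rfl
        have dQ₂R : ∀ a, a ∈ Q₂.support → a ∈ R'.support → a = z ∨ a = y := by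
          intro a h1 h2
          by_cases haz : a = z
          · exact Or.inl haz
          by_cases hay : a = y
          · exact Or.inr hay
          rcases memR a h2 with h2 | ⟨h2, hax⟩
          · exact absurd (Walk.support_takeUntil_subset P hzP h2) (interiorQ₂ a h1 haz hay)
          · rcases dQS a (Walk.support_dropUntil_subset Q hzQ h1) h2 with rfl | rfl
            · exact absurd rfl hax
            · exact absurd rfl hay
        have hP₂R : P₂ ≠ R' := by
          intro h; rw [← h] at hxR; exact hxP₂ hxR
        have hQ₂R : Q₂ ≠ R' := by
          intro h; rw [← h] at hxR; exact hxQ₂ hxR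
        have e0 := theta_ind hT hzy hP₂ hQ₂ hRp hc2 hP₂R hQ₂R dPQ₂ dP₂R dQ₂R
        have esR : eset R' = eset P₁ ∪ eset S := by
          rw [hRdef, eset_append, eset_reverse]
        have EQ1 : eset (P₂.append R'.reverse) = eset (P.append S.reverse) := by
          rw [eset_cyc, eset_cyc, esR, esP]
          ext e; simp only [Set.mem_union]; tauto
        have EQ2 : eset (Q₂.append R'.reverse) = eset (P₁.append T.reverse) := by
          rw [eset_cyc, eset_cyc, esR, esT]
          ext e; simp only [Set.mem_union]; tauto
        have hcyc2 : (P₂.append Q₂.reverse).IsCycle := cycle_of_paths hzy hP₂ hQ₂ hc2 dPQ₂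
        have hchi2 : chi (P₂.append Q₂.reverse) = chi P₂ + chi Q₂ := chi_cyc hzy hP₂ hQ₂ hc2 dPQ₂
        have hsize2 : size (chi (P₂.append Q₂.reverse)) = P₂.length + Q₂.length := by
          rw [size_chi hcyc2.isCircuit.isTrail.edges_nodup, Walk.length_append,
            Walk.length_reverse]
        by_cases hc1 : P₁ = Q₁
        · -- single theta cycle
          have EQ5 : eset (Q₂.append R'.reverse) = eset (Q.append S.reverse) := by
            rw [EQ2, hc1, EQ3]
          refine ⟨{⟨chi (P₂.append Q₂.reverse), z, _, hcyc2, rfl⟩}, ?_, ?_, ?_⟩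
          · rw [Multiset.map_singleton, Multiset.sum_singleton]
            show chi (P₂.append Q₂.reverse) = chi P + chi Q
            rw [hchi2, chiP, chiQ, hc1]
            funext e
            simp only [Pi.add_apply]
            have key : ∀ a b c : ZMod 2, b + c = (a + b) + (a + c) := by decide
            exact key _ _ _
          · rw [Multiset.map_singleton, Multiset.sum_singleton, setOf_chi]
            rw [← EQ1, ← EQ5]
            have key : ∀ a b c : ZMod 2, a + b + c = 0 → a = c + b := by decide
            exact key _ _ _ e0
          · rw [Multiset.map_singleton, Multiset.sum_singleton, hsize2]
            omega
        · obtain ⟨D, hval, hind, hsize⟩ :=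
            ih x z hzxne P₁ Q₁ T hP₁ hQ₁ hTp hc1 hPT hQT dPT dQT hrecbound
          refine ⟨⟨chi (P₂.append Q₂.reverse), z, _, hcyc2, rfl⟩ ::ₘ D, ?_, ?_, ?_⟩
          · rw [Multiset.map_cons, Multiset.sum_cons, hval]
            show chi (P₂.append Q₂.reverse) + (chi P₁ + chi Q₁) = chi P + chi Q
            rw [hchi2, chiP, chiQ]
            funext e
            simp only [Pi.add_apply]
            have key : ∀ a b c d : ZMod 2, (b + d) + (a + c) = (a + b) + (c + d) := by decide
            exact key _ _ _ _
          · rw [Multiset.map_cons, Multiset.sum_cons, hind, setOf_chi]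
            rw [← EQ1, ← EQ2, EQ3]
            have key : ∀ a b c q : ZMod 2, a + b + c = 0 → a + (b + q) = c + q := by decide
            exact key _ _ _ _ e0
          · rw [Multiset.map_cons, Multiset.sum_cons, hsize2]
            omega
    · -- base case: P and Q are internally disjoint
      have dPQ : ∀ a, a ∈ P.support → a ∈ Q.support → a = x ∨ a = y := by
        intro a h1 h2
        by_contra hcon
        push_neg at hcon
        exact hz ⟨a, h2, h1, hcon.1, hcon.2⟩
      have e0 := theta_ind hT hxy hP hQ hS hPQ hPS hQS dPQ dPS dQS
      have hcyc : (P.append Q.reverse).IsCycle := cycle_of_paths hxy hP hQ hPQ dPQ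
      refine ⟨{⟨chi (P.append Q.reverse), x, _, hcyc, rfl⟩}, ?_, ?_, ?_⟩
      · rw [Multiset.map_singleton, Multiset.sum_singleton]
        exact chi_cyc hxy hP hQ hPQ dPQ
      · rw [Multiset.map_singleton, Multiset.sum_singleton, setOf_chi]
        have key : ∀ a b c : ZMod 2, a + b + c = 0 → c + b = a := by decide
        exact (key _ _ _ e0).symm
      · rw [Multiset.map_singleton, Multiset.sum_singleton,
          size_chi hcyc.isCircuit.isTrail.edges_nodup, Walk.length_append, Walk.length_reverse]

lemma consistency [Fintype V] {B : Set (Set (Sym2 V))} (hT : ThetaCond G B) :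
    ∀ (n : ℕ) (M : Multiset (R G)),
      (M.map (fun f => size f.1)).sum ≤ n →
      (M.map Subtype.val).sum = 0 →
      (M.map (fun f => ind B {e | f.1 e = 1})).sum = 0 := by
  classical
  intro n
  induction n using Nat.strong_induction_on with
  | _ n ihn =>
  intro M hsizeM hvalM
  rcases Multiset.empty_or_exists_mem M with rfl | ⟨f₀, hf₀⟩
  · simp
  obtain ⟨u₀, w₀, hw₀, hchi₀⟩ := f₀.2
  have hlen : 3 ≤ w₀.length := hw₀.three_le_length
  have hedne : w₀.edges ≠ [] := by
    intro h
    have h2 := Walk.length_edges w₀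
    rw [h] at h2
    simp at h2
    omega
  obtain ⟨e, he⟩ : ∃ e, e ∈ w₀.edges := List.exists_mem_of_ne_nil _ hedne
  set M₁ := M.erase f₀ with hM₁def
  have hM : M = f₀ ::ₘ M₁ := (Multiset.cons_erase hf₀).symm
  have hf₀e : f₀.1 e = 1 := by rw [hchi₀]; exact chi_eq_one_iff.mpr he
  have hf₀size : 1 ≤ size f₀.1 := by
    unfold size
    rw [Finset.one_le_card]
    exact ⟨e, Finset.mem_filter.mpr ⟨Finset.mem_univ _, hf₀e⟩⟩
  have hsum_e : ((M₁.map Subtype.val).sum) e = 1 := by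
    have h1 : (M.map Subtype.val).sum e = 0 := by rw [hvalM]; rfl
    rw [hM, Multiset.map_cons, Multiset.sum_cons] at h1
    have h2 : f₀.1 e + (M₁.map Subtype.val).sum e = 0 := h1
    have key : ∀ a b : ZMod 2, a = 1 → a + b = 0 → b = 1 := by decide
    exact key _ _ hf₀e h2
  have hex : ∃ f₁ ∈ M₁, f₁.1 e = 1 := by
    by_contra hcon
    push_neg at hcon
    have h0 : ((M₁.map Subtype.val).sum) e = 0 := by
      rw [multiset_sum_apply]
      apply Multiset.sum_eq_zero
      intro a ha
      rw [Multiset.map_map, Multiset.mem_map] at ha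
      obtain ⟨g, hg, rfl⟩ := ha
      have key : ∀ a : ZMod 2, a ≠ 1 → a = 0 := by decide
      exact key _ (hcon g hg)
    rw [h0] at hsum_e
    exact absurd hsum_e (by decide)
  obtain ⟨f₁, hf₁M, hf₁e⟩ := hex
  set M₂ := M₁.erase f₁ with hM₂def
  have hM₁ : M₁ = f₁ ::ₘ M₂ := (Multiset.cons_erase hf₁M).symm
  by_cases hff : f₁ = f₀
  · -- cancel a duplicated pair
    have hval₂ : (M₂.map Subtype.val).sum = 0 := by
      have h1 := hvalM
      rw [hM, hM₁, hff, Multiset.map_cons, Multiset.map_cons,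
        Multiset.sum_cons, Multiset.sum_cons, ← add_assoc, chi_add_self, zero_add] at h1
      exact h1
    have hsize₂ : (M₂.map (fun f => size f.1)).sum + 2 * size f₀.1
        = (M.map (fun f => size f.1)).sum := by
      rw [hM, hM₁, hff, Multiset.map_cons, Multiset.map_cons,
        Multiset.sum_cons, Multiset.sum_cons]
      ring
    have hind₂ := ihn ((M₂.map (fun f => size f.1)).sum) (by omega) M₂ le_rfl hval₂
    rw [hM, hM₁, hff, Multiset.map_cons, Multiset.map_cons,
      Multiset.sum_cons, Multiset.sum_cons, ← add_assoc, zmod2_add_self, zero_add]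
    exact hind₂
  · -- theta surgery on two distinct cycles sharing the edge e
    obtain ⟨u₁, w₁, hw₁, hchi₁⟩ := f₁.2
    have he₁ : e ∈ w₁.edges := chi_eq_one_iff.mp (by rw [← hchi₁]; exact hf₁e)
    obtain ⟨x, y, hadj, P, hPp, hePxy, hePnot, hPmem⟩ := cycle_split hw₀ he
    obtain ⟨x', y', hadj', P', hP'p, heP'xy, heP'not, hP'mem⟩ := cycle_split hw₁ he₁
    have hxy : x ≠ y := hadj.ne
    obtain ⟨Q, hQp, heQnot, hQmem⟩ : ∃ Q : G.Walk x y, Q.IsPath ∧ e ∉ Q.edges ∧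
        (∀ e', e' ∈ w₁.edges ↔ e' = e ∨ e' ∈ Q.edges) := by
      have heq : s(x, y) = s(x', y') := by rw [← hePxy, ← heP'xy]
      rcases Sym2.eq_iff.mp heq with ⟨h1, h2⟩ | ⟨h1, h2⟩
      · subst h1; subst h2
        exact ⟨P', hP'p, heP'not, hP'mem⟩
      · subst h1; subst h2
        refine ⟨P'.reverse, hP'p.reverse, ?_, ?_⟩
        · rw [Walk.edges_reverse, List.mem_reverse]; exact heP'not
        · intro e'; rw [Walk.edges_reverse, List.mem_reverse]; exact hP'mem e'
    set S : G.Walk x y := Walk.cons hadj Walk.nil with hSdef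
    have hSe : S.edges = [e] := by rw [hSdef, Walk.edges_cons, Walk.edges_nil, hePxy]
    have hSsup : S.support = [x, y] := by rw [hSdef, Walk.support_cons, Walk.support_nil]
    have hSp : S.IsPath := by
      apply Walk.IsPath.mk'
      rw [hSsup]
      simp [hxy]
    have hPQ : P ≠ Q := by
      intro hcon
      apply hff
      apply Subtype.ext
      rw [hchi₁, hchi₀]
      funext e'
      unfold chi
      rw [if_congr ((hQmem e').trans ((hcon ▸ (hPmem e').symm : _))) rfl rfl]
    have hPS : P ≠ S := by
      intro hcon
      apply hePnot
      rw [hcon, hSe]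
      exact List.mem_singleton_self e
    have hQS : Q ≠ S := by
      intro hcon
      apply heQnot
      rw [hcon, hSe]
      exact List.mem_singleton_self e
    have dPS : ∀ a, a ∈ P.support → a ∈ S.support → a = x ∨ a = y := by
      intro a _ h2
      rw [hSsup] at h2
      simpa using h2
    have dQS : ∀ a, a ∈ Q.support → a ∈ S.support → a = x ∨ a = y := by
      intro a _ h2
      rw [hSsup] at h2
      simpa using h2
    obtain ⟨D, hvalD, hindD, hsizeD⟩ :=
      pair hT (P.length + Q.length) x y hxy P Q S hPp hQp hSp hPQ hPS hQS dPS dQS le_rfl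
    -- decompose the two chis
    have split_chi : ∀ {u : V} (w : G.Walk u u) (Pp : G.Walk x y),
        (∀ e', e' ∈ w.edges ↔ e' = e ∨ e' ∈ Pp.edges) → e ∉ Pp.edges →
        chi w = chi S + chi Pp := by
      intro u w Pp hmem hnot
      funext e'
      simp only [chi, Pi.add_apply, hSe, List.mem_singleton]
      by_cases h1 : e' = e
      · subst h1
        rw [if_pos ((hmem e').mpr (Or.inl rfl)), if_pos rfl, if_neg hnot]
        decide
      · by_cases h2 : e' ∈ Pp.edges
        · rw [if_pos ((hmem e').mpr (Or.inr h2)), if_neg h1, if_pos h2]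
          decide
        · rw [if_neg (fun hcon => ((hmem e').mp hcon).elim h1 h2), if_neg h1, if_neg h2]
          decide
    have hchiP : f₀.1 = chi S + chi P := by rw [hchi₀]; exact split_chi w₀ P hPmem hePnot
    have hchiQ : f₁.1 = chi S + chi Q := by rw [hchi₁]; exact split_chi w₁ Q hQmem heQnot
    -- the edge sets of the two glued cycles
    have hsetP : {e' | f₀.1 e' = 1} = eset (P.append S.reverse) := by
      ext e'
      rw [Set.mem_setOf_eq, hchi₀, chi_eq_one_iff, eset_cyc]
      rw [hPmem e']
      simp only [Set.mem_union, eset, Set.mem_setOf_eq, hSe, List.mem_singleton]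
      tauto
    have hsetQ : {e' | f₁.1 e' = 1} = eset (Q.append S.reverse) := by
      ext e'
      rw [Set.mem_setOf_eq, hchi₁, chi_eq_one_iff, eset_cyc]
      rw [hQmem e']
      simp only [Set.mem_union, eset, Set.mem_setOf_eq, hSe, List.mem_singleton]
      tauto
    -- sizes
    have hsizeP : size f₀.1 = P.length + 1 := by
      have hfil : Finset.univ.filter (fun a => f₀.1 a = 1)
          = insert e (Finset.univ.filter (fun a => chi P a = 1)) := by
        ext a
        simp only [Finset.mem_filter, Finset.mem_univ, true_and, Finset.mem_insert]
        rw [hchi₀, chi_eq_one_iff, chi_eq_one_iff, hPmem a]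
      have hnotm : e ∉ Finset.univ.filter (fun a => chi P a = 1) := by
        simp only [Finset.mem_filter, Finset.mem_univ, true_and, chi_eq_one_iff]
        exact hePnot
      have hsz := size_chi (p := P) hPp.isTrail.edges_nodup
      unfold size at hsz ⊢
      rw [hfil, Finset.card_insert_of_notMem hnotm, hsz]
    have hsizeQ : size f₁.1 = Q.length + 1 := by
      have hfil : Finset.univ.filter (fun a => f₁.1 a = 1)
          = insert e (Finset.univ.filter (fun a => chi Q a = 1)) := by
        ext a
        simp only [Finset.mem_filter, Finset.mem_univ, true_and, Finset.mem_insert]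
        rw [hchi₁, chi_eq_one_iff, chi_eq_one_iff, hQmem a]
      have hnotm : e ∉ Finset.univ.filter (fun a => chi Q a = 1) := by
        simp only [Finset.mem_filter, Finset.mem_univ, true_and, chi_eq_one_iff]
        exact heQnot
      have hsz := size_chi (p := Q) hQp.isTrail.edges_nodup
      unfold size at hsz ⊢
      rw [hfil, Finset.card_insert_of_notMem hnotm, hsz]
    -- the new multiset
    set M' : Multiset (R G) := D + M₂ with hM'def
    have hvalM' : (M'.map Subtype.val).sum = 0 := by
      rw [hM'def, Multiset.map_add, Multiset.sum_add, hvalD]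
      have h1 := hvalM
      rw [hM, hM₁, Multiset.map_cons, Multiset.map_cons, Multiset.sum_cons,
        Multiset.sum_cons, hchiP, hchiQ] at h1
      funext e'
      have h2 := congrFun h1 e'
      simp only [Pi.add_apply, Pi.zero_apply] at h2 ⊢
      have key : ∀ s p q t : ZMod 2, (s + p) + ((s + q) + t) = 0 → (p + q) + t = 0 := by decide
      exact key _ _ _ _ h2
    have hsizeM' : (M'.map (fun f => size f.1)).sum
        + (size f₀.1 + size f₁.1)
        ≤ (M.map (fun f => size f.1)).sum + (P.length + Q.length) := by
      rw [hM'def, Multiset.map_add, Multiset.sum_add, hM, hM₁, Multiset.map_cons,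
        Multiset.map_cons, Multiset.sum_cons, Multiset.sum_cons]
      omega
    have hindM' := ihn ((M'.map (fun f => size f.1)).sum)
      (by omega) M' le_rfl hvalM'
    rw [hM'def, Multiset.map_add, Multiset.sum_add, hindD] at hindM'
    rw [hM, hM₁, Multiset.map_cons, Multiset.map_cons, Multiset.sum_cons,
      Multiset.sum_cons, hsetP, hsetQ]
    have key : ∀ a b t : ZMod 2, (a + b) + t = 0 → a + (b + t) = 0 := by decide
    exact key _ _ _ hindM'

lemma exists_sigma [Fintype V] {B : Set (Set (Sym2 V))} (hT : ThetaCond G B) :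
    ∃ σ : Sym2 V → ℤ, (∀ e ∈ G.edgeSet, σ e = 1 ∨ σ e = -1) ∧
      ∀ (v : V) (w : G.Walk v v), w.IsCycle →
        ((w.edges.map σ).prod = -1 ↔ {e | e ∈ w.edges} ∈ B) := by
  classical
  set SS : Set ((Sym2 V → ZMod 2) × ZMod 2) :=
    {p | ∃ f : R G, p = (f.1, ind B {e | f.1 e = 1})} with hSS
  set W : Submodule (ZMod 2) ((Sym2 V → ZMod 2) × ZMod 2) :=
    Submodule.span (ZMod 2) SS with hWdef
  have h01 : ((0, 1) : (Sym2 V → ZMod 2) × ZMod 2) ∉ W := by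
    intro hmem
    rw [hWdef, Submodule.mem_span_set] at hmem
    obtain ⟨c, hcsup, hcsum⟩ := hmem
    have hchoice : ∀ p ∈ c.support, ∃ f : R G, p = (f.1, ind B {e | f.1 e = 1}) :=
      fun p hp => hcsup hp
    choose F hF using hchoice
    set M : Multiset (R G) := c.support.attach.val.map (fun q => F q.1 q.2) with hMdef
    have hc1 : ∀ p ∈ c.support, c p = 1 := by
      intro p hp
      have h := Finsupp.mem_support_iff.mp hp
      revert h; generalize c p = a; revert a; decide
    have hsum : ∑ p ∈ c.support, p = ((0, 1) : (Sym2 V → ZMod 2) × ZMod 2) := by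
      rw [← hcsum, Finsupp.sum]
      apply Finset.sum_congr rfl
      intro p hp
      rw [hc1 p hp, one_smul]
    have hval : (M.map Subtype.val).sum = 0 := by
      have : (M.map Subtype.val).sum = ∑ q ∈ c.support.attach, (F q.1 q.2).1 := by
        rw [hMdef, Multiset.map_map]; rfl
      rw [this]
      have h2 : ∑ q ∈ c.support.attach, (F q.1 q.2).1
          = ∑ q ∈ c.support.attach, (q.1).1 := by
        apply Finset.sum_congr rfl
        intro q _
        exact (congrArg Prod.fst (hF q.1 q.2)).symm
      rw [h2, Finset.sum_attach c.support (fun p => p.1), ← Prod.fst_sum, hsum]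
    have hindsum : (M.map (fun f => ind B {e | f.1 e = 1})).sum = 1 := by
      have : (M.map (fun f => ind B {e | f.1 e = 1})).sum
          = ∑ q ∈ c.support.attach, ind B {e | (F q.1 q.2).1 e = 1} := by
        rw [hMdef, Multiset.map_map]; rfl
      rw [this]
      have h2 : ∑ q ∈ c.support.attach, ind B {e | (F q.1 q.2).1 e = 1}
          = ∑ q ∈ c.support.attach, (q.1).2 := by
        apply Finset.sum_congr rfl
        intro q _
        exact (congrArg Prod.snd (hF q.1 q.2)).symm
      rw [h2, Finset.sum_attach c.support (fun p => p.2), ← Prod.snd_sum, hsum]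
    have h0 := consistency hT ((M.map (fun f => size f.1)).sum) M le_rfl hval
    rw [hindsum] at h0
    exact absurd h0 (by decide)
  obtain ⟨φ, hφ0, hφW⟩ := Submodule.exists_dual_map_eq_bot_of_notMem h01 inferInstance
  have hφWzero : ∀ p ∈ W, φ p = 0 := by
    intro p hp
    have : φ p ∈ W.map φ := Submodule.mem_map_of_mem hp
    rw [hφW] at this
    exact (Submodule.mem_bot _).mp this
  have hφ01 : φ (0, 1) = 1 := by
    revert hφ0; generalize φ (0, 1) = a; revert a; decide
  set ψ : (Sym2 V → ZMod 2) →ₗ[ZMod 2] ZMod 2 := φ.comp (LinearMap.inl _ _ _) with hψdef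
  have hψ : ∀ g, ψ g = φ (g, 0) := fun g => rfl
  set s : Sym2 V → ZMod 2 := fun e => ψ (fun e' => if e' = e then 1 else 0) with hs
  set σ : Sym2 V → ℤ := fun e => if s e = 1 then -1 else 1 with hσ
  have hchiSum : ∀ (l : List (Sym2 V)), l.Nodup →
      (fun e => if e ∈ l then (1 : ZMod 2) else 0)
        = (l.map (fun e => (fun e' => if e' = e then (1 : ZMod 2) else 0))).sum := by
    intro l hl
    induction l with
    | nil => funext e; simp
    | cons a l ihl =>
      rw [List.nodup_cons] at hl
      rw [List.map_cons, List.sum_cons, ← ihl hl.2]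
      funext e
      simp only [Pi.add_apply, List.mem_cons]
      by_cases h1 : e = a
      · subst h1
        rw [if_pos (Or.inl rfl), if_pos rfl, if_neg hl.1]
        decide
      · by_cases h2 : e ∈ l
        · rw [if_pos (Or.inr h2), if_neg h1, if_pos h2]
          decide
        · rw [if_neg (by tauto), if_neg h1, if_neg h2]
          decide
  have hsumchi : ∀ {v : V} (w : G.Walk v v), w.IsCycle →
      (w.edges.map s).sum = ind B (eset w) := by
    intro v w hw
    have h1 : (w.edges.map s).sum = ψ (chi w) := by
      have h3 : chi w
          = (w.edges.map (fun e => (fun e' => if e' = e then (1 : ZMod 2) else 0))).sum :=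
        hchiSum w.edges hw.isCircuit.isTrail.edges_nodup
      rw [h3, map_list_sum, List.map_map]
      rfl
    rw [h1]
    have hmem : ((chi w, ind B {e | chi w e = 1}) : (Sym2 V → ZMod 2) × ZMod 2) ∈ W := by
      rw [hWdef]
      apply Submodule.subset_span
      exact ⟨⟨chi w, v, w, hw, rfl⟩, rfl⟩
    have h2 : φ (chi w, ind B {e | chi w e = 1}) = 0 := hφWzero _ hmem
    have h3 : ((chi w, ind B {e | chi w e = 1}) : (Sym2 V → ZMod 2) × ZMod 2)
        = (chi w, 0) + (ind B {e | chi w e = 1}) • ((0, 1) : (Sym2 V → ZMod 2) × ZMod 2) := by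
      apply Prod.ext
      · simp
      · simp
    rw [h3, map_add, map_smul, hφ01, smul_eq_mul, mul_one] at h2
    have key : ∀ a b : ZMod 2, a + b = 0 → a = b := by decide
    have h4 := key _ _ h2
    rw [setOf_chi] at h4
    rw [hψ]
    exact h4
  have prodSign : ∀ l : List (Sym2 V),
      (l.map σ).prod = (if (l.map s).sum = 1 then (-1 : ℤ) else 1) := by
    intro l
    induction l with
    | nil =>
      rw [List.map_nil, List.prod_nil, List.map_nil, List.sum_nil, if_neg (by decide)]
    | cons a l ihl =>
      rw [List.map_cons, List.prod_cons, List.map_cons, List.sum_cons, ihl]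
      have ha : s a = 0 ∨ s a = 1 := by generalize s a = b; revert b; decide
      rcases ha with h | h
      · have hσa : σ a = 1 := by rw [hσ]; simp [h]
        rw [hσa, h, zero_add, one_mul]
      · have hσa : σ a = -1 := by rw [hσ]; simp [h]
        rw [hσa, h]
        by_cases hr : (l.map s).sum = 1
        · rw [if_pos hr, hr, if_neg (by decide)]
          norm_num
        · have hr0 : (l.map s).sum = 0 := by
            revert hr; generalize (l.map s).sum = b; revert b; decide
          rw [if_neg hr, hr0, if_pos (by decide)]
          norm_num
  refine ⟨σ, fun e _ => by by_cases h : s e = 1 <;> simp [hσ, h], ?_⟩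
  intro v w hw
  rw [prodSign w.edges, hsumchi w hw]
  by_cases h : eset w ∈ B
  · rw [if_pos (ind_eq_one_iff.mpr h)]
    simpa [eset] using h
  · rw [if_neg (fun hcon => h (ind_eq_one_iff.mp hcon))]
    constructor
    · intro hcon; norm_num at hcon
    · intro hcon; exact absurd hcon h

lemma sigma_to_theta {B : Set (Set (Sym2 V))} {σ : Sym2 V → ℤ}
    (hσ1 : ∀ e ∈ G.edgeSet, σ e = 1 ∨ σ e = -1)
    (hσ : ∀ (v : V) (w : G.Walk v v), w.IsCycle →
      ((w.edges.map σ).prod = -1 ↔ {e | e ∈ w.edges} ∈ B)) :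
    ThetaCond G B := by
  intro u v huv p₁ p₂ p₃ h1 h2 h3 h12 h13 h23 d12 d13 d23
  have hprod : ∀ (p q : G.Walk u v),
      ((p.append q.reverse).edges.map σ).prod
        = (p.edges.map σ).prod * (q.edges.map σ).prod := by
    intro p q
    rw [Walk.edges_append, List.map_append, List.prod_append, Walk.edges_reverse,
      List.map_reverse, List.prod_reverse]
  have hlist : ∀ l : List (Sym2 V), (∀ e ∈ l, σ e = 1 ∨ σ e = -1) →
      (l.map σ).prod = 1 ∨ (l.map σ).prod = -1 := by
    intro l hl
    induction l with
    | nil => left; rfl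
    | cons a l ihl =>
      rw [List.map_cons, List.prod_cons]
      rcases hl a (List.mem_cons_self) with h | h <;>
        rcases ihl (fun e he => hl e (List.mem_cons_of_mem a he)) with h2 | h2 <;>
        rw [h, h2] <;> norm_num
  have c12 := cycle_of_paths huv h1 h2 h12 d12
  have c23 := cycle_of_paths huv h2 h3 h23 d23
  have c13 := cycle_of_paths huv h1 h3 h13 d13
  have e12 := hσ u _ c12
  have e23 := hσ u _ c23
  have e13 := hσ u _ c13
  rw [hprod] at e12 e23 e13
  rcases hlist p₁.edges (fun e he => hσ1 e (p₁.edges_subset_edgeSet he)) with ha1 | ha1 <;>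
    rcases hlist p₂.edges (fun e he => hσ1 e (p₂.edges_subset_edgeSet he)) with ha2 | ha2 <;>
    rcases hlist p₃.edges (fun e he => hσ1 e (p₃.edges_subset_edgeSet he)) with ha3 | ha3 <;>
    rw [ha1, ha2] at e12 <;> rw [ha2, ha3] at e23 <;> rw [ha1, ha3] at e13 <;>
    norm_num at e12 e23 e13 <;>
    simp only [Walk.edges_append, Walk.edges_reverse, List.mem_append, List.mem_reverse] <;>
    tauto

end NCaux


/-- A class `B` of cycles of a graph `G` (cycles being recorded by their edge sets) is
the class of negative cycles of some signed graph `(G, σ)` iff every theta subgraph of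
`G` — the union of three pairwise internally disjoint paths `p₁, p₂, p₃` joining the
same two distinct vertices — contains an even number (0 or 2) of cycles of `B` among
its three cycles `p₁ ∪ p₂`, `p₂ ∪ p₃`, `p₁ ∪ p₃`. -/
theorem negative_cycle_classes {V : Type*} [Fintype V] (G : SimpleGraph V)
    (B : Set (Set (Sym2 V)))
    (hB : ∀ C ∈ B, ∃ (v : V) (w : G.Walk v v), w.IsCycle ∧ C = {e | e ∈ w.edges}) :
    (∃ σ : Sym2 V → ℤ, (∀ e ∈ G.edgeSet, σ e = 1 ∨ σ e = -1) ∧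
        ∀ (v : V) (w : G.Walk v v), w.IsCycle →
          ((w.edges.map σ).prod = -1 ↔ {e | e ∈ w.edges} ∈ B)) ↔
      ∀ (u v : V), u ≠ v → ∀ (p₁ p₂ p₃ : G.Walk u v),
        p₁.IsPath → p₂.IsPath → p₃.IsPath →
        p₁ ≠ p₂ → p₁ ≠ p₃ → p₂ ≠ p₃ →
        (∀ x, x ∈ p₁.support → x ∈ p₂.support → x = u ∨ x = v) →
        (∀ x, x ∈ p₁.support → x ∈ p₃.support → x = u ∨ x = v) →
        (∀ x, x ∈ p₂.support → x ∈ p₃.support → x = u ∨ x = v) →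
        (({e | e ∈ (p₁.append p₂.reverse).edges} ∈ B ∧
            {e | e ∈ (p₂.append p₃.reverse).edges} ∈ B ∧
            {e | e ∈ (p₁.append p₃.reverse).edges} ∉ B) ∨
         ({e | e ∈ (p₁.append p₂.reverse).edges} ∈ B ∧
            {e | e ∈ (p₂.append p₃.reverse).edges} ∉ B ∧
            {e | e ∈ (p₁.append p₃.reverse).edges} ∈ B) ∨
         ({e | e ∈ (p₁.append p₂.reverse).edges} ∉ B ∧
            {e | e ∈ (p₂.append p₃.reverse).edges} ∈ B ∧
            {e | e ∈ (p₁.append p₃.reverse).edges} ∈ B) ∨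
         ({e | e ∈ (p₁.append p₂.reverse).edges} ∉ B ∧
            {e | e ∈ (p₂.append p₃.reverse).edges} ∉ B ∧
            {e | e ∈ (p₁.append p₃.reverse).edges} ∉ B)) := by
  constructor
  · rintro ⟨σ, hσ1, hσ⟩
    exact NCaux.sigma_to_theta hσ1 hσ
  · intro h
    exact NCaux.exists_sigma h
end

section
/- Acharya's spectral criterion for balance: A signed simple graph Σ = (Γ, σ) is balanced if and only if its adjacency matrix A(Σ) has the same characteristic polynomial (equivalently, the same eigenvalues with multiplicities) as the adjacency matrix A(Γ) of the underlying unsigned graph. -/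
open SimpleGraph
open scoped Classical

/-- The adjacency matrix of the signed simple graph `(G, σ)`: the `(i,j)` entry is
`σ(v_i v_j)` if `v_i v_j` is an edge and `0` otherwise. -/
noncomputable def signedAdj {V : Type*} [Fintype V] (G : SimpleGraph V)
    (σ : Sym2 V → ℤ) : Matrix V V ℝ :=
  Matrix.of fun i j => if G.Adj i j then (σ s(i, j) : ℝ) else 0

open Polynomial Matrix

section LinAlg
variable {n : Type*} [Fintype n] [DecidableEq n]

lemma acharya_charpoly_conj {R : Type*} [CommRing R] (P Q M : Matrix n n R)
    (h1 : P * Q = 1) (h2 : Q * P = 1) : (P * M * Q).charpoly = M.charpoly := by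
  have hmap : ∀ A B : Matrix n n R, (A * B).map (C : R → R[X]) = A.map C * B.map C := by
    intro A B; exact Matrix.map_mul
  have hPQ : (P.map (C : R → R[X])) * (Q.map C) = 1 := by
    rw [← hmap, h1]; simp
  have key : charmatrix (P * M * Q) = P.map C * charmatrix M * Q.map C := by
    rw [charmatrix, charmatrix, mul_sub, sub_mul]
    congr 1
    · have hs : (Matrix.scalar n (X : R[X])) = ((X : R[X]) • (1 : Matrix n n R[X])) := by
        ext i j
        simp [Matrix.scalar, Matrix.smul_apply, Matrix.one_apply, Matrix.diagonal]
      rw [hs, mul_smul_comm, smul_mul_assoc, mul_one, hPQ]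
    · simp only [RingHom.mapMatrix_apply]
      rw [← hmap, ← hmap]
  rw [Matrix.charpoly, Matrix.charpoly, key, Matrix.det_mul, Matrix.det_mul]
  have h3 : (P.map (C : R → R[X])).det * (Q.map C).det = 1 := by
    rw [← Matrix.det_mul, hPQ, Matrix.det_one]
  calc (P.map (C : R → R[X])).det * (charmatrix M).det * (Q.map C).det
      = ((P.map (C : R → R[X])).det * (Q.map C).det) * (charmatrix M).det := by ring
    _ = (charmatrix M).det := by rw [h3, one_mul]

lemma acharya_charpoly_diagonal {R : Type*} [CommRing R] (d : n → R) :
    (Matrix.diagonal d).charpoly = ∏ i, (X - C (d i)) := by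
  have h : charmatrix (Matrix.diagonal d) = Matrix.diagonal fun i => (X - C (d i)) := by
    ext i j
    by_cases h : i = j
    · subst h; simp [charmatrix_apply_eq]
    · simp [charmatrix_apply_ne _ _ _ h, Matrix.diagonal_apply_ne _ h]
  rw [Matrix.charpoly, h, Matrix.det_diagonal]

lemma acharya_conj_pow {R : Type*} [CommRing R] (P Q M : Matrix n n R)
    (h1 : P * Q = 1) (h2 : Q * P = 1) (k : ℕ) : (P * M * Q) ^ k = P * M ^ k * Q := by
  induction k with
  | zero => simpa using h1.symm
  | succ k ih =>
      rw [pow_succ, ih, pow_succ]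
      calc P * M ^ k * Q * (P * M * Q) = P * M ^ k * (Q * P) * M * Q := by
            noncomm_ring
        _ = P * (M ^ k * M) * Q := by rw [h2]; noncomm_ring

end LinAlg

section Herm
variable {n : Type*} [Fintype n] [DecidableEq n]

lemma acharya_herm_charpoly (A : Matrix n n ℝ) (hA : A.IsHermitian) :
    A.charpoly = ((Finset.univ.val.map hA.eigenvalues).map fun μ => X - C μ).prod := by
  have hU1 : (hA.eigenvectorUnitary : Matrix n n ℝ) * star (hA.eigenvectorUnitary : Matrix n n ℝ) = 1 :=
    (Matrix.mem_unitaryGroup_iff).mp (hA.eigenvectorUnitary).2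
  have hU2 : star (hA.eigenvectorUnitary : Matrix n n ℝ) * (hA.eigenvectorUnitary : Matrix n n ℝ) = 1 :=
    (Matrix.mem_unitaryGroup_iff').mp (hA.eigenvectorUnitary).2
  conv_lhs => rw [hA.spectral_theorem, Unitary.conjStarAlgAut_apply]
  rw [acharya_charpoly_conj _ _ _ hU1 hU2, acharya_charpoly_diagonal]
  rw [Finset.prod, Multiset.map_map]
  rfl

lemma acharya_herm_trace_pow (A : Matrix n n ℝ) (hA : A.IsHermitian) (k : ℕ) :
    (A ^ k).trace = ((Finset.univ.val.map hA.eigenvalues).map fun μ => μ ^ k).sum := by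
  have hU1 : (hA.eigenvectorUnitary : Matrix n n ℝ) * star (hA.eigenvectorUnitary : Matrix n n ℝ) = 1 :=
    (Matrix.mem_unitaryGroup_iff).mp (hA.eigenvectorUnitary).2
  have hU2 : star (hA.eigenvectorUnitary : Matrix n n ℝ) * (hA.eigenvectorUnitary : Matrix n n ℝ) = 1 :=
    (Matrix.mem_unitaryGroup_iff').mp (hA.eigenvectorUnitary).2
  conv_lhs => rw [hA.spectral_theorem, Unitary.conjStarAlgAut_apply]
  rw [acharya_conj_pow _ _ _ hU1 hU2, Matrix.trace_mul_cycle,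
    hU2, Matrix.one_mul, Matrix.diagonal_pow, Matrix.trace_diagonal]
  rw [Finset.sum, Multiset.map_map]
  rfl

lemma acharya_trace_pow_eq_of_charpoly_eq {A B : Matrix n n ℝ} (hA : A.IsHermitian)
    (hB : B.IsHermitian) (h : A.charpoly = B.charpoly) (k : ℕ) :
    (A ^ k).trace = (B ^ k).trace := by
  have hroots : Finset.univ.val.map hA.eigenvalues = Finset.univ.val.map hB.eigenvalues := by
    have := h
    rw [acharya_herm_charpoly A hA, acharya_herm_charpoly B hB] at this
    have := congrArg Polynomial.roots this
    rwa [Polynomial.roots_multiset_prod_X_sub_C, Polynomial.roots_multiset_prod_X_sub_C] at this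
  rw [acharya_herm_trace_pow A hA k, acharya_herm_trace_pow B hB k, hroots]

end Herm

open SimpleGraph
open scoped Classical

section Graph
variable {V : Type*} (G : SimpleGraph V) (σ : Sym2 V → ℤ)

lemma acharya_sign_pm (hσ : ∀ e ∈ G.edgeSet, σ e = 1 ∨ σ e = -1) :
    ∀ {u v : V} (w : G.Walk u v), (w.edges.map σ).prod = 1 ∨ (w.edges.map σ).prod = -1 := by
  intro u v w
  induction w with
  | nil => simp
  | cons h p ih =>
      rename_i a b c
      have he : s(a, b) ∈ G.edgeSet := h
      simp only [Walk.edges_cons, List.map_cons, List.prod_cons]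
      rcases hσ _ he with h1 | h1 <;> rcases ih with h2 | h2 <;> simp [h1, h2]

lemma acharya_walk_sign_sq (hσ : ∀ e ∈ G.edgeSet, σ e = 1 ∨ σ e = -1)
    {u v : V} (w : G.Walk u v) : (w.edges.map σ).prod * (w.edges.map σ).prod = 1 := by
  rcases acharya_sign_pm G σ hσ w with h | h <;> rw [h] <;> norm_num

lemma acharya_path_edge {u v : V} (q : G.Walk u v) (hq : q.IsPath)
    (he : s(u, v) ∈ q.edges) : q.length = 1 := by
  induction q with
  | nil => simp at he
  | cons h p ih =>
      rename_i a b c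
      simp only [Walk.edges_cons, List.mem_cons] at he
      rcases he with he | he
      · rcases Sym2.eq_iff.mp he with ⟨-, rfl⟩ | ⟨rfl, -⟩
        · have hp : p.IsPath := ((Walk.cons_isPath_iff h p).mp hq).1
          have : p = Walk.nil := Walk.isPath_iff_eq_nil.mp hp
          subst this
          simp
        · exact absurd rfl h.ne
      · exfalso
        have : a ∈ p.support := Walk.fst_mem_support_of_mem_edges p (by rwa [Sym2.eq_swap] at he)
        exact ((Walk.cons_isPath_iff h p).mp hq).2 this

lemma acharya_edges_of_length_one {u v : V} (q : G.Walk u v) (h : q.length = 1) :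
    q.edges = [s(u, v)] := by
  match q with
  | .nil => simp at h
  | .cons h' .nil => simp
  | .cons h' (.cons h'' p) => simp [Walk.length_cons] at h

lemma acharya_closed_walk_pos (hσ : ∀ e ∈ G.edgeSet, σ e = 1 ∨ σ e = -1)
    (hb : ∀ ⦃v : V⦄ (w : G.Walk v v), w.IsCycle → (w.edges.map σ).prod = 1) :
    ∀ (n : ℕ) {v : V} (w : G.Walk v v), w.length = n → (w.edges.map σ).prod = 1 := by
  intro n
  induction n using Nat.strong_induction_on with
  | _ n ih =>
  intro v w hlen
  cases w with
  | nil => simp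
  | cons h q =>
    rename_i u
    -- h : G.Adj v u, q : G.Walk u v
    by_cases hq : q.IsPath
    · by_cases he : s(v, u) ∈ q.edges
      · have hl : q.length = 1 := acharya_path_edge G q hq (by rwa [Sym2.eq_swap] at he)
        have hed : q.edges = [s(u, v)] := acharya_edges_of_length_one G q hl
        simp only [Walk.edges_cons, hed, List.map_cons, List.map_nil, List.prod_cons,
          List.prod_nil, mul_one]
        rw [Sym2.eq_swap (a := v) (b := u)]
        rcases hσ _ (G.mem_edgeSet.mpr h.symm) with h1 | h1 <;> rw [h1] <;> norm_num
      · exact hb _ ((Walk.cons_isCycle_iff q h).mpr ⟨hq, he⟩)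
    · -- q has a repeated vertex
      have hnd : ¬ q.support.Nodup := fun hn => hq ((Walk.isPath_def q).mpr hn)
      obtain ⟨x, hx2⟩ : ∃ x, 2 ≤ q.support.count x := by
        by_contra hc
        push_neg at hc
        exact hnd (List.nodup_iff_count_le_one.mpr fun a => by have := hc a; omega)
      have hxq : x ∈ q.support := by
        have : 0 < q.support.count x := by omega
        exact List.count_pos_iff.mp this
      have hxw : x ∈ (Walk.cons h q).support := by
        simp [Walk.support_cons, hxq]
      have main : ∀ (w' : G.Walk x x), w'.length = n → 2 ≤ List.count x w'.support.tail →
          ((w'.edges.map σ)).prod = 1 := by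
        intro w' hlen' hcount
        cases w' with
        | nil => simp at hcount
        | cons h₂ p₂ =>
          rename_i y
          -- h₂ : G.Adj x y, p₂ : G.Walk y x
          have hy : x ∈ p₂.support := p₂.end_mem_support
          have hspec := (p₂.take_spec hy)
          set d := p₂.takeUntil x hy with hd
          set e := p₂.dropUntil x hy with he
          have hcd : p₂.support = d.support ++ e.support.tail := by
            rw [← hspec, Walk.support_append]
          have hcount1 : d.support.count x = 1 := p₂.count_support_takeUntil_eq_one hy
          have hcount2 : 1 ≤ e.support.tail.count x := by
            have h1 : p₂.support.count x = d.support.count x + e.support.tail.count x := by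
              rw [hcd, List.count_append]
            have h2 : 2 ≤ p₂.support.count x := by
              simpa [Walk.support_cons] using hcount
            omega
          have helen : 1 ≤ e.length := by
            have h1 : e.support.tail.count x ≤ e.support.tail.length := List.count_le_length
            have h2 : e.support.tail.length = e.length := by
              have := e.length_support
              simp [List.length_tail, this]
            omega
          have hdlen : d.length + 1 + e.length = n := by
            have hls := congrArg Walk.length hspec
            rw [Walk.length_append] at hls
            have hl2 : (Walk.cons h₂ p₂).length = n := hlen'
            rw [Walk.length_cons] at hl2
            omega
          have hsplit : (Walk.cons h₂ p₂).edges.map σ =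
              ((Walk.cons h₂ d).edges.map σ) ++ (e.edges.map σ) := by
            rw [← hspec]
            simp [Walk.edges_cons, Walk.edges_append]
          rw [hsplit, List.prod_append]
          have hc1 : (((Walk.cons h₂ d).edges.map σ)).prod = 1 := by
            refine ih (d.length + 1) (by omega) (Walk.cons h₂ d) ?_
            simp [Walk.length_cons]
          have hc2 : ((e.edges.map σ)).prod = 1 := ih e.length (by omega) e rfl
          rw [hc1, hc2, mul_one]
      have hperm : List.Perm ((Walk.cons h q).rotate x hxw).edges (Walk.cons h q).edges :=
        ((Walk.cons h q).rotate_edges x hxw).perm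
      have hlen' : ((Walk.cons h q).rotate x hxw).length = n := by
        have hle : ((Walk.cons h q).rotate x hxw).edges.length = (Walk.cons h q).edges.length :=
          hperm.length_eq
        rwa [Walk.length_edges, Walk.length_edges, hlen] at hle
      have hcount : 2 ≤ ((Walk.cons h q).rotate x hxw).support.tail.count x := by
        have hrot : List.Perm ((Walk.cons h q).rotate x hxw).support.tail
            (Walk.cons h q).support.tail := ((Walk.cons h q).support_rotate x hxw).perm
        rw [hrot.count_eq]
        simpa [Walk.support_cons] using hx2
      have := main _ hlen' hcount
      rwa [((hperm.map σ).prod_eq)] at this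

lemma acharya_same_sign (hσ : ∀ e ∈ G.edgeSet, σ e = 1 ∨ σ e = -1)
    (hb : ∀ ⦃v : V⦄ (w : G.Walk v v), w.IsCycle → (w.edges.map σ).prod = 1)
    {a b : V} (w₁ w₂ : G.Walk a b) :
    (w₁.edges.map σ).prod = (w₂.edges.map σ).prod := by
  have hclosed := acharya_closed_walk_pos G σ hσ hb (w₁.append w₂.reverse).length
      (w₁.append w₂.reverse) rfl
  rw [Walk.edges_append, Walk.edges_reverse, List.map_append, List.prod_append,
    List.map_reverse, List.prod_reverse] at hclosed
  rcases acharya_sign_pm G σ hσ w₁ with h1 | h1 <;>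
    rcases acharya_sign_pm G σ hσ w₂ with h2 | h2 <;>
      rw [h1, h2] at hclosed ⊢ <;> norm_num at hclosed

lemma acharya_switching (hσ : ∀ e ∈ G.edgeSet, σ e = 1 ∨ σ e = -1)
    (hb : ∀ ⦃v : V⦄ (w : G.Walk v v), w.IsCycle → (w.edges.map σ).prod = 1) :
    ∃ θ : V → ℤ, (∀ v, θ v = 1 ∨ θ v = -1) ∧
      ∀ u v, G.Adj u v → σ s(u, v) = θ u * θ v := by
  classical
  have hreach : ∀ v : V, G.Reachable ((G.connectedComponentMk v).out) v := by
    intro v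
    apply ConnectedComponent.exact
    exact Quot.out_eq _
  set θ : V → ℤ := fun v => (((hreach v).some).edges.map σ).prod with hθ
  refine ⟨θ, fun v => acharya_sign_pm G σ hσ _, ?_⟩
  intro u v huv
  have hcomp : (G.connectedComponentMk u) = (G.connectedComponentMk v) :=
    ConnectedComponent.sound huv.reachable
  -- walk from rep of v to v through u
  have hw : ∀ w : G.Walk ((G.connectedComponentMk v).out) v, (w.edges.map σ).prod = θ v :=
    fun w => acharya_same_sign G σ hσ hb w ((hreach v).some)
  have hout : (G.connectedComponentMk u).out = (G.connectedComponentMk v).out := by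
    rw [hcomp]
  have hkey := hw ((((hreach u).some).copy hout rfl).append (Walk.cons huv Walk.nil))
  rw [Walk.edges_append, List.map_append, List.prod_append, Walk.edges_copy] at hkey
  simp only [Walk.edges_cons, Walk.edges_nil, List.map_cons, List.map_nil, List.prod_cons,
    List.prod_nil, mul_one] at hkey
  -- hkey : θ u * σ s(u,v) = θ v
  have hsq : θ u * θ u = 1 := acharya_walk_sign_sq G σ hσ _
  calc σ s(u, v) = (θ u * θ u) * σ s(u, v) := by rw [hsq, one_mul]
    _ = θ u * (θ u * σ s(u, v)) := by ring
    _ = θ u * θ v := by rw [hkey]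

variable [Fintype V] [DecidableEq V] [DecidableRel G.Adj]

lemma acharya_pow_apply (n : ℕ) (u v : V) :
    (signedAdj G σ ^ n) u v = ∑ p ∈ G.finsetWalkLength n u v, ((p.edges.map σ).prod : ℝ) := by
  induction n generalizing u v with
  | zero =>
      obtain rfl | h := eq_or_ne u v
      · simp [finsetWalkLength, Matrix.one_apply]
      · simp [finsetWalkLength, Matrix.one_apply, h]
  | succ n ih =>
      rw [pow_succ']
      rw [Matrix.mul_apply]
      have hL : ∀ x, (signedAdj G σ) u x * (signedAdj G σ ^ n) x v
          = if G.Adj u x then (σ s(u, x) : ℝ) * ∑ p ∈ G.finsetWalkLength n x v, ((p.edges.map σ).prod : ℝ) else 0 := by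
        intro x
        by_cases h : G.Adj u x
        · rw [if_pos h]
          have h1 : signedAdj G σ u x = (σ s(u, x) : ℝ) := by
            simp only [signedAdj, Matrix.of_apply, if_pos h]
          rw [h1, ih]
        · rw [if_neg h]
          have h1 : signedAdj G σ u x = 0 := by
            simp only [signedAdj, Matrix.of_apply, if_neg h]
          rw [h1, zero_mul]
      simp only [hL]
      rw [← Finset.sum_filter]
      have hfil : Finset.univ.filter (fun x => G.Adj u x) = (G.neighborSet u).toFinset := by
        ext x; simp
      rw [hfil]
      rw [Finset.sum_subtype ((G.neighborSet u).toFinset) (p := fun x => G.Adj u x) (by simp)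
        (fun x => (σ s(u, x) : ℝ) * ∑ p ∈ G.finsetWalkLength n x v, ((p.edges.map σ).prod : ℝ))]
      simp only [finsetWalkLength]
      rw [Finset.sum_biUnion ?disj]
      case disj =>
        rintro ⟨x, hx⟩ - ⟨y, hy⟩ - hxy
        simp only [Function.onFun]
        rw [Finset.disjoint_left]
        rintro p hp hp'
        simp only [Finset.mem_map, Function.Embedding.coeFn_mk] at hp hp'
        obtain ⟨px, _, rfl⟩ := hp
        obtain ⟨py, hpy, hp⟩ := hp'
        cases hp
        simp at hxy
      refine Finset.sum_congr rfl ?_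
      rintro ⟨x, hx⟩ -
      rw [Finset.sum_map, Finset.mul_sum]
      refine Finset.sum_congr rfl fun p hp => ?_
      simp [Walk.edges_cons]
      rfl


lemma acharya_signedAdj_isHermitian : (signedAdj G σ).IsHermitian := by
  ext i j
  simp only [Matrix.conjTranspose_apply, signedAdj, Matrix.of_apply, star_trivial]
  by_cases h : G.Adj i j
  · rw [if_pos h, if_pos h.symm, Sym2.eq_swap]
  · rw [if_neg h, if_neg (fun h' => h h'.symm)]

lemma acharya_adjMatrix_isHermitian : (G.adjMatrix ℝ).IsHermitian := by
  ext i j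
  simp only [Matrix.conjTranspose_apply, star_trivial, SimpleGraph.adjMatrix_apply]
  by_cases h : G.Adj i j
  · rw [if_pos h, if_pos h.symm]
  · rw [if_neg h, if_neg (fun h' => h h'.symm)]

end Graph

/-- Acharya's spectral criterion for balance: `Σ = (G, σ)` is balanced iff `A(Σ)` has
the same characteristic polynomial (hence the same eigenvalues with multiplicities) as
the adjacency matrix of the underlying unsigned graph. -/
theorem acharya_balance_criterion {V : Type*} [Fintype V] [DecidableEq V]
    (G : SimpleGraph V) [DecidableRel G.Adj]
    (σ : Sym2 V → ℤ) (hσ : ∀ e ∈ G.edgeSet, σ e = 1 ∨ σ e = -1) :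
    IsBalanced G σ ↔ (signedAdj G σ).charpoly = (G.adjMatrix ℝ).charpoly := by
  constructor
  · -- balanced → equal charpoly
    intro hb
    obtain ⟨θ, hpm, hθ⟩ := acharya_switching G σ hσ hb
    set D : Matrix V V ℝ := Matrix.diagonal (fun v => (θ v : ℝ)) with hD
    have hDD : D * D = 1 := by
      rw [hD, Matrix.diagonal_mul_diagonal]
      have hfun : (fun v => (θ v : ℝ) * (θ v : ℝ)) = fun _ => 1 := by
        funext v; rcases hpm v with h | h <;> rw [h] <;> norm_num
      rw [hfun, Matrix.diagonal_one]
    have hsa : signedAdj G σ = D * (G.adjMatrix ℝ) * D := by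
      ext i j
      rw [Matrix.mul_diagonal, Matrix.diagonal_mul]
      simp only [signedAdj, Matrix.of_apply, SimpleGraph.adjMatrix_apply, hD]
      by_cases h : G.Adj i j
      · rw [if_pos h, if_pos h]
        have := hθ i j h
        push_cast [this]
        ring
      · rw [if_neg h, if_neg h, mul_zero, zero_mul]
    rw [hsa, acharya_charpoly_conj D D _ hDD hDD]
  · -- equal charpoly → balanced
    intro hch
    intro v w hcyc
    by_contra hne
    have hsign : (w.edges.map σ).prod = -1 := by
      rcases acharya_sign_pm G σ hσ w with h | h
      · exact absurd h hne
      · exact h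
    set n := w.length with hn
    have htr := acharya_trace_pow_eq_of_charpoly_eq (acharya_signedAdj_isHermitian G σ)
      (acharya_adjMatrix_isHermitian G) hch n
    have hlt : ((signedAdj G σ) ^ n).trace < ((G.adjMatrix ℝ) ^ n).trace := by
      rw [Matrix.trace, Matrix.trace]
      refine Finset.sum_lt_sum (fun i _ => ?_) ⟨v, Finset.mem_univ v, ?_⟩
      · rw [Matrix.diag_apply, Matrix.diag_apply, acharya_pow_apply,
          SimpleGraph.adjMatrix_pow_apply_eq_card_walk, SimpleGraph.card_set_walk_length_eq,
          Finset.card_eq_sum_ones]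
        rw [Nat.cast_sum]
        refine Finset.sum_le_sum fun p _ => ?_
        rcases acharya_sign_pm G σ hσ p with h | h <;> rw [h] <;> norm_num
      · rw [Matrix.diag_apply, Matrix.diag_apply, acharya_pow_apply,
          SimpleGraph.adjMatrix_pow_apply_eq_card_walk, SimpleGraph.card_set_walk_length_eq,
          Finset.card_eq_sum_ones]
        rw [Nat.cast_sum]
        refine Finset.sum_lt_sum (fun p _ => ?_) ⟨w, ?_, ?_⟩
        · rcases acharya_sign_pm G σ hσ p with h | h <;> rw [h] <;> norm_num
        · exact SimpleGraph.mem_finsetWalkLength_iff.mpr rfl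
        · rw [hsign]; norm_num
    rw [htr] at hlt
    exact lt_irrefl _ hlt
end

section
/- The Kirchhoff matrix K(Σ) = D(Γ) − A(Σ) of a signed simple graph Σ on n vertices is positive semidefinite, its rank over the real numbers is n − b(Σ), and its nullity is b(Σ). -/
open SimpleGraph
open scoped Classical

/-- The Kirchhoff matrix `K(Σ) = D(G) - A(Σ)`, where `D(G)` is the diagonal matrix of
vertex degrees of the underlying graph. -/
noncomputable def kirchhoff {V : Type*} [Fintype V] [DecidableEq V]
    (G : SimpleGraph V) (σ : Sym2 V → ℤ) : Matrix V V ℝ :=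
  Matrix.diagonal (fun v => (Nat.card (G.neighborSet v) : ℝ)) - signedAdj G σ

/-- `b(Σ)`: the number of connected components of `G` on which `Σ` restricts to a
balanced signed graph (every cycle in the component has sign `+1`). -/
noncomputable def numBalancedComponents {V : Type*} (G : SimpleGraph V)
    (σ : Sym2 V → ℤ) : ℕ :=
  Nat.card {c : G.ConnectedComponent //
    ∀ (v : V) (w : G.Walk v v), G.connectedComponentMk v = c → w.IsCycle →
      (w.edges.map σ).prod = 1}

namespace SignedKirchhoffAux

variable {V : Type*} {G : SimpleGraph V} {σ : Sym2 V → ℤ}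

/-- sign of a walk -/
def wSgn (σ : Sym2 V → ℤ) {a b : V} (w : G.Walk a b) : ℤ := (w.edges.map σ).prod

@[simp] lemma wSgn_nil {a : V} : wSgn σ (Walk.nil : G.Walk a a) = 1 := rfl

@[simp] lemma wSgn_cons {a b c : V} (h : G.Adj a b) (p : G.Walk b c) :
    wSgn σ (Walk.cons h p) = σ s(a, b) * wSgn σ p := by
  simp [wSgn]

@[simp] lemma wSgn_append {a b c : V} (p : G.Walk a b) (q : G.Walk b c) :
    wSgn σ (p.append q) = wSgn σ p * wSgn σ q := by
  simp [wSgn, Walk.edges_append]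

@[simp] lemma wSgn_reverse {a b : V} (p : G.Walk a b) :
    wSgn σ p.reverse = wSgn σ p := by
  simp [wSgn, Walk.edges_reverse, List.prod_reverse]

@[simp] lemma wSgn_copy {a b a' b' : V} (p : G.Walk a b) (ha : a = a') (hb : b = b') :
    wSgn σ (p.copy ha hb) = wSgn σ p := by
  subst ha; subst hb; rfl

lemma wSgn_unit (hσ : ∀ e ∈ G.edgeSet, σ e = 1 ∨ σ e = -1) {a b : V} (w : G.Walk a b) :
    wSgn σ w = 1 ∨ wSgn σ w = -1 := by
  induction w with
  | nil => left; rfl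
  | cons h p ih =>
    rcases hσ _ (G.mem_edgeSet.mpr h) with h1 | h1 <;> rcases ih with h2 | h2 <;>
      simp [h1, h2]

lemma length_eq_one_of_mem_edges {a b : V} (p : G.Walk a b) (hp : p.IsPath)
    (he : s(a, b) ∈ p.edges) : p.length = 1 := by
  cases p with
  | nil => simp at he
  | @cons _ y _ h r =>
    rw [Walk.edges_cons, List.mem_cons] at he
    rcases he with he | he
    · rw [Sym2.eq_iff] at he
      rcases he with ⟨-, rfl⟩ | ⟨rfl, rfl⟩
      · have : r = Walk.nil := Walk.isPath_iff_eq_nil.mp ((Walk.cons_isPath_iff h r).mp hp).1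
        subst this; rfl
      · exact absurd rfl h.ne
    · have ha : a ∈ r.support := Walk.fst_mem_support_of_mem_edges r he
      exact absurd ha ((Walk.cons_isPath_iff h r).mp hp).2


/-- Balanced predicate on a connected component (matches `numBalancedComponents`). -/
def Bal (G : SimpleGraph V) (σ : Sym2 V → ℤ) (c : G.ConnectedComponent) : Prop :=
  ∀ (v : V) (w : G.Walk v v), G.connectedComponentMk v = c → w.IsCycle →
    (w.edges.map σ).prod = 1

lemma closedWalk_sgn [DecidableEq V] (hσ : ∀ e ∈ G.edgeSet, σ e = 1 ∨ σ e = -1)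
    {c : G.ConnectedComponent} (hc : Bal G σ c) :
    ∀ (n : ℕ) (u : V), G.connectedComponentMk u = c → ∀ w : G.Walk u u,
      w.length ≤ n → wSgn σ w = 1 := by
  intro n
  induction n with
  | zero =>
    intro u hu w hw
    cases w with
    | nil => rfl
    | cons h q => simp [Walk.length_cons] at hw
  | succ n ih =>
    intro u hu w hw
    by_cases hnd : w.support.tail.Nodup
    · cases w with
      | nil => rfl
      | @cons _ x _ h q =>
        have hq : q.IsPath := (Walk.isPath_def q).mpr (by simpa using hnd)
        by_cases he : s(u, x) ∈ q.edges
        · -- q is a path from x to u containing the edge s(x,u); it has length 1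
          have hq1 : q.length = 1 :=
            length_eq_one_of_mem_edges q hq (by rwa [Sym2.eq_swap])
          cases q with
          | nil => simp at hq1
          | @cons _ y _ h' r =>
            cases r with
            | nil =>
              rcases hσ s(u, x) (G.mem_edgeSet.mpr h) with h1 | h1 <;>
                simp [wSgn_cons, Sym2.eq_swap, h1] <;>
                rw [show s(x, u) = s(u, x) from Sym2.eq_swap] <;> rw [h1] <;> norm_num
            | cons h'' r' => simp [Walk.length_cons] at hq1
        · have hcyc : (Walk.cons h q).IsCycle := (Walk.cons_isCycle_iff q h).mpr ⟨hq, he⟩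
          exact hc u _ hu hcyc
    · -- some vertex y is repeated in the tail of the support: split the walk
      obtain ⟨y, hydup⟩ := List.exists_duplicate_iff_not_nodup.mpr hnd
      have hy : y ∈ w.support := by
        rw [Walk.support_eq_cons]
        exact List.mem_cons_of_mem _ hydup.mem
      have hyc : G.connectedComponentMk y = c :=
        (ConnectedComponent.sound ⟨w.takeUntil y hy⟩).symm.trans hu
      set w' : G.Walk y y := w.rotate y hy with hw'def
      have hperm : List.Perm (w'.edges.map σ) (w.edges.map σ) := ((w.rotate_edges y hy).perm.map σ)
      have hprod : wSgn σ w' = wSgn σ w := hperm.prod_eq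
      have hlen : w'.length = w.length := by
        have := hperm.length_eq
        simpa [Walk.length_edges] using this
      have hcount : 2 ≤ w'.support.tail.count y := by
        rw [(Walk.support_rotate w y hy).perm.count_eq]
        exact List.duplicate_iff_two_le_count.mp hydup
      clear_value w'
      rw [← hprod]
      cases w' with
      | nil => simp at hcount
      | @cons _ z _ h₂ q =>
        rw [Walk.support_cons, List.tail_cons] at hcount
        have hyq : y ∈ q.support := List.count_pos_iff.mp (by omega)
        have hspec := q.take_spec hyq
        cases hd : q.dropUntil y hyq with
        | nil =>
          rw [hd, Walk.append_nil] at hspec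
          have : q.support.count y = 1 := by
            rw [← hspec]; exact q.count_support_takeUntil_eq_one hyq
          omega
        | @cons _ z' _ h₃ d' =>
          rw [hd] at hspec
          have hqlen : (q.takeUntil y hyq).length + (d'.length + 1) = q.length := by
            have := congrArg Walk.length hspec
            simpa [Walk.length_append, Walk.length_cons] using this
          have hwlen : q.length + 1 ≤ n + 1 := by
            rw [← hlen] at hw
            simpa [Walk.length_cons] using hw
          have e1 := ih y hyc (Walk.cons h₂ (q.takeUntil y hyq)) (by
            simp only [Walk.length_cons]; omega)
          have e2 := ih y hyc (Walk.cons h₃ d') (by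
            simp only [Walk.length_cons]; omega)
          rw [← hspec]
          calc wSgn σ (Walk.cons h₂ ((q.takeUntil y hyq).append (Walk.cons h₃ d')))
              = wSgn σ (Walk.cons h₂ (q.takeUntil y hyq)) * wSgn σ (Walk.cons h₃ d') := by
                simp [mul_assoc]
            _ = 1 := by rw [e1, e2]; ring

noncomputable def cOut (c : G.ConnectedComponent) : V := Quot.out c

lemma cOut_spec (c : G.ConnectedComponent) : G.connectedComponentMk (cOut c) = c :=
  Quot.out_eq c

/-- A choice of walk from the basepoint of the component of `v` to `v`. -/
noncomputable def baseWalk (G : SimpleGraph V) (v : V) :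
    G.Walk (cOut (G.connectedComponentMk v)) v :=
  Classical.choice (ConnectedComponent.exact (cOut_spec (G.connectedComponentMk v)))

/-- The potential (switching function) of a vertex. -/
noncomputable def pot (G : SimpleGraph V) (σ : Sym2 V → ℤ) (v : V) : ℤ :=
  wSgn σ (baseWalk G v)

lemma pot_unit (hσ : ∀ e ∈ G.edgeSet, σ e = 1 ∨ σ e = -1) (v : V) :
    pot G σ v = 1 ∨ pot G σ v = -1 := wSgn_unit hσ _

variable [DecidableEq V]

lemma walk_sgn_eq_pot (hσ : ∀ e ∈ G.edgeSet, σ e = 1 ∨ σ e = -1) {v : V}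
    (hb : Bal G σ (G.connectedComponentMk v))
    (p : G.Walk (cOut (G.connectedComponentMk v)) v) : wSgn σ p = pot G σ v := by
  have h2 : wSgn σ (p.append (baseWalk G v).reverse) = 1 :=
    closedWalk_sgn hσ hb _ _ (cOut_spec _) _ le_rfl
  rw [wSgn_append, wSgn_reverse] at h2
  rw [pot]
  rcases wSgn_unit hσ p with h3 | h3 <;>
    rcases wSgn_unit hσ (baseWalk G v) with h4 | h4 <;>
    rw [h3, h4] at h2 ⊢ <;> norm_num at h2

lemma pot_adj (hσ : ∀ e ∈ G.edgeSet, σ e = 1 ∨ σ e = -1) {a b : V}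
    (hb : Bal G σ (G.connectedComponentMk a)) (h : G.Adj a b) :
    pot G σ a = σ s(a, b) * pot G σ b := by
  have hcomp : G.connectedComponentMk b = G.connectedComponentMk a :=
    ConnectedComponent.sound h.symm.reachable
  have hp := walk_sgn_eq_pot hσ hb
    (((baseWalk G b).concat h.symm).copy (by rw [hcomp]) rfl)
  rw [wSgn_copy] at hp
  have : wSgn σ ((baseWalk G b).concat h.symm) = pot G σ b * σ s(a, b) := by
    simp [wSgn, Walk.edges_concat, Sym2.eq_swap, pot]
  rw [this] at hp
  rw [← hp]; ring

lemma pot_out (hσ : ∀ e ∈ G.edgeSet, σ e = 1 ∨ σ e = -1) {c : G.ConnectedComponent}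
    (hb : Bal G σ c) : pot G σ (cOut c) = 1 := by
  have e : G.connectedComponentMk (cOut c) = c := cOut_spec c
  have := closedWalk_sgn hσ hb ((baseWalk G (cOut c)).length) (cOut c) e
    ((baseWalk G (cOut c)).copy (by rw [e]) rfl) (by simp)
  rwa [wSgn_copy] at this

end SignedKirchhoffAux

namespace SignedKirchhoffAux

open Matrix Finset

variable {V : Type*} {G : SimpleGraph V} {σ : Sym2 V → ℤ} [Fintype V] [DecidableEq V]

lemma signedAdj_apply (i j : V) :
    signedAdj G σ i j = if G.Adj i j then (σ s(i, j) : ℝ) else 0 := rfl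

lemma signedAdj_symm (i j : V) : signedAdj G σ j i = signedAdj G σ i j := by
  simp only [signedAdj_apply]
  rw [Sym2.eq_swap, if_congr (G.adj_comm j i) rfl rfl]

lemma card_neighbor_eq (i : V) :
    ((Nat.card (G.neighborSet i) : ℝ)) = ∑ j, if G.Adj i j then (1 : ℝ) else 0 := by
  rw [Finset.sum_boole, Nat.card_eq_fintype_card, ← Set.toFinset_card]
  congr 2
  simp [neighborSet, Set.toFinset_setOf]
  ext j; simp
  exact Set.mem_toFinset

lemma quad (hσ : ∀ e ∈ G.edgeSet, σ e = 1 ∨ σ e = -1) (x : V → ℝ) :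
    x ⬝ᵥ (kirchhoff G σ) *ᵥ x =
      (∑ i, ∑ j, if G.Adj i j then (x i - σ s(i, j) * x j) ^ 2 else 0) / 2 := by
  have hD : x ⬝ᵥ (Matrix.diagonal (fun v => (Nat.card (G.neighborSet v) : ℝ)) *ᵥ x)
      = ∑ i, ∑ j, if G.Adj i j then x i * x i else 0 := by
    simp only [dotProduct, mulVec_diagonal]
    refine Finset.sum_congr rfl fun i _ => ?_
    rw [card_neighbor_eq, Finset.sum_mul, Finset.mul_sum]
    refine Finset.sum_congr rfl fun j _ => ?_
    split_ifs <;> ring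
  have hA : x ⬝ᵥ (signedAdj G σ *ᵥ x)
      = ∑ i, ∑ j, if G.Adj i j then (σ s(i, j) : ℝ) * x i * x j else 0 := by
    simp only [dotProduct, mulVec]
    refine Finset.sum_congr rfl fun i _ => ?_
    rw [Finset.mul_sum]
    refine Finset.sum_congr rfl fun j _ => ?_
    rw [signedAdj_apply]
    split_ifs <;> ring
  rw [kirchhoff, sub_mulVec, dotProduct_sub, hD, hA]
  have hexp : ∀ i j, (if G.Adj i j then (x i - σ s(i, j) * x j) ^ 2 else 0)
      = (if G.Adj i j then x i * x i - σ s(i, j) * x i * x j else 0)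
        + (if G.Adj i j then x j * x j - σ s(i, j) * x i * x j else 0) := by
    intro i j
    by_cases h : G.Adj i j
    · rcases hσ _ (G.mem_edgeSet.mpr h) with h1 | h1 <;>
        simp only [h, if_true, h1] <;> push_cast <;> ring
    · simp [h]
  simp_rw [hexp, Finset.sum_add_distrib]
  have hswap : (∑ i, ∑ j, if G.Adj i j then x j * x j - (σ s(i, j) : ℝ) * x i * x j else 0)
      = (∑ i, ∑ j, if G.Adj i j then x i * x i - (σ s(i, j) : ℝ) * x i * x j else 0) := by
    rw [Finset.sum_comm]
    refine Finset.sum_congr rfl fun i _ => Finset.sum_congr rfl fun j _ => ?_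
    by_cases h : G.Adj j i
    · rw [if_pos h, if_pos ((G.adj_comm j i).mp h), Sym2.eq_swap]; ring
    · rw [if_neg h, if_neg (fun hh => h ((G.adj_comm i j).mp hh))]
  rw [hswap]
  have hsplit : (∑ i, ∑ j, if G.Adj i j then x i * x i - (σ s(i, j) : ℝ) * x i * x j else 0)
      = (∑ i, ∑ j, if G.Adj i j then x i * x i else 0)
        - (∑ i, ∑ j, if G.Adj i j then (σ s(i, j) : ℝ) * x i * x j else 0) := by
    rw [← Finset.sum_sub_distrib]
    refine Finset.sum_congr rfl fun i _ => ?_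
    rw [← Finset.sum_sub_distrib]
    refine Finset.sum_congr rfl fun j _ => ?_
    split_ifs <;> ring
  rw [hsplit]
  ring

lemma kirchhoff_isHermitian : (kirchhoff G σ).IsHermitian := by
  ext i j
  simp only [conjTranspose_apply, star_trivial, kirchhoff, Matrix.sub_apply, signedAdj_symm]
  congr 1
  by_cases h : i = j
  · subst h; rfl
  · rw [Matrix.diagonal_apply_ne _ (Ne.symm h), Matrix.diagonal_apply_ne _ h]

lemma kirchhoff_posSemidef (hσ : ∀ e ∈ G.edgeSet, σ e = 1 ∨ σ e = -1) :
    (kirchhoff G σ).PosSemidef := by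
  refine .of_dotProduct_mulVec_nonneg kirchhoff_isHermitian fun x => ?_
  rw [star_trivial, quad hσ x]
  apply div_nonneg _ (by norm_num)
  refine Finset.sum_nonneg fun i _ => Finset.sum_nonneg fun j _ => ?_
  split_ifs <;> positivity

lemma mulVec_eq_zero_iff (hσ : ∀ e ∈ G.edgeSet, σ e = 1 ∨ σ e = -1) (x : V → ℝ) :
    (kirchhoff G σ) *ᵥ x = 0 ↔ ∀ i j, G.Adj i j → x i = (σ s(i, j) : ℝ) * x j := by
  constructor
  · intro h0 i j hij
    have hq : (∑ i, ∑ j, if G.Adj i j then (x i - σ s(i, j) * x j) ^ 2 else 0) = 0 := by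
      have hq2 := quad hσ x
      rw [h0, dotProduct_zero] at hq2
      linarith
    have h1 := (Finset.sum_eq_zero_iff_of_nonneg (fun i _ =>
      Finset.sum_nonneg fun j _ => by split_ifs <;> positivity)).mp hq
      i (Finset.mem_univ i)
    have h2 := (Finset.sum_eq_zero_iff_of_nonneg (fun j _ => by
      split_ifs <;> positivity)).mp h1 j (Finset.mem_univ j)
    rw [if_pos hij] at h2
    have := (pow_eq_zero_iff two_ne_zero).mp h2
    linarith [sub_eq_zero.mp this]
  · intro hrel
    funext i
    simp only [kirchhoff, sub_mulVec, Pi.sub_apply, mulVec_diagonal, Pi.zero_apply]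
    have hAi : (signedAdj G σ *ᵥ x) i = ∑ j, if G.Adj i j then (σ s(i, j) : ℝ) * x j else 0 := by
      simp only [mulVec, dotProduct]
      refine Finset.sum_congr rfl fun j _ => ?_
      rw [signedAdj_apply]
      split_ifs <;> ring
    rw [hAi, card_neighbor_eq, Finset.sum_mul, ← Finset.sum_sub_distrib]
    refine Finset.sum_eq_zero fun j _ => ?_
    by_cases h : G.Adj i j
    · rw [if_pos h, if_pos h, hrel i j h]; ring
    · simp [h]

lemma pot_def (v : V) : pot G σ v = wSgn σ (baseWalk G v) := rfl

lemma ker_rel_walk (hσ : ∀ e ∈ G.edgeSet, σ e = 1 ∨ σ e = -1) {x : V → ℝ}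
    (hx : ∀ i j, G.Adj i j → x i = (σ s(i, j) : ℝ) * x j) :
    ∀ {a b : V} (p : G.Walk a b), x b = (wSgn σ p : ℝ) * x a := by
  intro a b p
  induction p with
  | nil => simp
  | @cons a y b h q ih =>
    have h1 := hx _ _ h
    have hy : x y = (σ s(a, y) : ℝ) * x a := by
      rcases hσ _ (G.mem_edgeSet.mpr h) with h2 | h2 <;> rw [h2] at h1 ⊢ <;>
        push_cast at h1 ⊢ <;> linarith
    rw [wSgn_cons]
    push_cast
    rw [ih, hy]
    ring

lemma nullity_eq (hσ : ∀ e ∈ G.edgeSet, σ e = 1 ∨ σ e = -1) :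
    Module.finrank ℝ (LinearMap.ker (kirchhoff G σ).mulVecLin) =
      Nat.card {c : G.ConnectedComponent // Bal G σ c} := by
  classical
  haveI : Finite G.ConnectedComponent := Quot.finite _
  haveI : Fintype {c : G.ConnectedComponent // Bal G σ c} := Fintype.ofFinite _
  have hker_iff : ∀ x : V → ℝ, x ∈ LinearMap.ker (kirchhoff G σ).mulVecLin ↔
      ∀ i j, G.Adj i j → x i = (σ s(i, j) : ℝ) * x j := by
    intro x
    rw [LinearMap.mem_ker, Matrix.mulVecLin_apply]
    exact mulVec_eq_zero_iff hσ x
  set B := {c : G.ConnectedComponent // Bal G σ c} with hB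
  let fwd : LinearMap.ker (kirchhoff G σ).mulVecLin →ₗ[ℝ] (B → ℝ) :=
    LinearMap.pi fun c => (LinearMap.proj (cOut c.1)).comp (Submodule.subtype _)
  let bwd0 : (B → ℝ) →ₗ[ℝ] (V → ℝ) :=
    LinearMap.pi fun v => if h : Bal G σ (G.connectedComponentMk v)
      then (pot G σ v : ℝ) • LinearMap.proj (⟨G.connectedComponentMk v, h⟩ : B) else 0
  have hbwd0 : ∀ (y : B → ℝ) (v : V), bwd0 y v =
      if h : Bal G σ (G.connectedComponentMk v)
      then y ⟨G.connectedComponentMk v, h⟩ * (pot G σ v : ℝ) else 0 := by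
    intro y v
    simp only [bwd0, LinearMap.pi_apply]
    split_ifs with h
    · simp [mul_comm]
    · rfl
  have hmem : ∀ y : B → ℝ, bwd0 y ∈ LinearMap.ker (kirchhoff G σ).mulVecLin := by
    intro y
    rw [hker_iff]
    intro i j hij
    have hcomp : G.connectedComponentMk i = G.connectedComponentMk j :=
      ConnectedComponent.sound hij.reachable
    rw [hbwd0, hbwd0]
    by_cases h : Bal G σ (G.connectedComponentMk i)
    · have h' : Bal G σ (G.connectedComponentMk j) := hcomp ▸ h
      rw [dif_pos h, dif_pos h']
      have hsub : (⟨G.connectedComponentMk i, h⟩ : B) = ⟨G.connectedComponentMk j, h'⟩ :=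
        Subtype.ext hcomp
      rw [hsub, pot_adj hσ h hij]
      push_cast
      ring
    · rw [dif_neg h, dif_neg (fun h' => h (hcomp.symm ▸ h'))]
      ring
  let bwd : (B → ℝ) →ₗ[ℝ] LinearMap.ker (kirchhoff G σ).mulVecLin :=
    LinearMap.codRestrict _ bwd0 hmem
  have h1 : fwd.comp bwd = LinearMap.id := by
    refine LinearMap.ext fun y => funext fun c => ?_
    rw [show (fwd.comp bwd) y c = bwd0 y (cOut c.1) from rfl, hbwd0]
    have hb : Bal G σ (G.connectedComponentMk (cOut c.1)) := by
      rw [cOut_spec]; exact c.2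
    rw [dif_pos hb]
    have hsub : (⟨G.connectedComponentMk (cOut c.1), hb⟩ : B) = c := Subtype.ext (cOut_spec c.1)
    rw [hsub, pot_out hσ c.2]
    simp
  have h2 : bwd.comp fwd = LinearMap.id := by
    refine LinearMap.ext fun xk => Subtype.ext (funext fun v => ?_)
    have hx : ∀ i j, G.Adj i j → (xk : V → ℝ) i = (σ s(i, j) : ℝ) * (xk : V → ℝ) j :=
      (hker_iff _).mp xk.2
    show bwd0 (fwd xk) v = (xk : V → ℝ) v
    rw [hbwd0]
    by_cases h : Bal G σ (G.connectedComponentMk v)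
    · rw [dif_pos h]
      rw [show fwd xk ⟨G.connectedComponentMk v, h⟩
          = (xk : V → ℝ) (cOut (G.connectedComponentMk v)) from rfl]
      have hwalk := ker_rel_walk hσ hx (baseWalk G v)
      rw [hwalk, pot_def]
      ring
    · rw [dif_neg h]
      unfold Bal at h
      push_neg at h
      obtain ⟨v₀, w, hv₀, hcyc, hne⟩ := h
      have hsgn : wSgn σ w = -1 := by
        rcases wSgn_unit hσ w with h' | h'
        · exact absurd h' hne
        · exact h'
      have h0 : (xk : V → ℝ) v₀ = 0 := by
        have hw := ker_rel_walk hσ hx w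
        rw [hsgn] at hw
        push_cast at hw
        linarith
      obtain ⟨p⟩ : G.Reachable v₀ v := ConnectedComponent.exact hv₀
      have hp := ker_rel_walk hσ hx p
      rw [hp, h0, mul_zero]
  have e : (LinearMap.ker (kirchhoff G σ).mulVecLin) ≃ₗ[ℝ] (B → ℝ) :=
    LinearEquiv.ofLinear fwd bwd h1 h2
  rw [e.finrank_eq, Module.finrank_fintype_fun_eq_card]
  exact (Nat.card_eq_fintype_card).symm

end SignedKirchhoffAux

/-- The Kirchhoff matrix of a signed simple graph on `n` vertices is positive
semidefinite, its rank over `ℝ` is `n - b(Σ)`, and its nullity is `b(Σ)`. -/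
theorem kirchhoff_posSemidef_rank_nullity {V : Type*} [Fintype V] [DecidableEq V]
    (G : SimpleGraph V) (σ : Sym2 V → ℤ)
    (hσ : ∀ e ∈ G.edgeSet, σ e = 1 ∨ σ e = -1) :
    (kirchhoff G σ).PosSemidef ∧
    (kirchhoff G σ).rank = Fintype.card V - numBalancedComponents G σ ∧
    Module.finrank ℝ (LinearMap.ker (kirchhoff G σ).mulVecLin) =
      numBalancedComponents G σ := by
  classical
  have hnull0 : Nat.card {c : G.ConnectedComponent // SignedKirchhoffAux.Bal G σ c}
      = numBalancedComponents G σ := rfl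
  have hnull := SignedKirchhoffAux.nullity_eq (G := G) (σ := σ) hσ
  rw [hnull0] at hnull
  refine ⟨SignedKirchhoffAux.kirchhoff_posSemidef hσ, ?_, hnull⟩
  have hrn := LinearMap.finrank_range_add_finrank_ker ((kirchhoff G σ).mulVecLin)
  rw [Module.finrank_fintype_fun_eq_card] at hrn
  have hr : (kirchhoff G σ).rank
      = Module.finrank ℝ (LinearMap.range (kirchhoff G σ).mulVecLin) := rfl
  omega
end

section
/- If the underlying graph Γ of a signed simple graph Σ is regular of degree k, then every eigenvalue of the adjacency matrix A(Σ) is at most k, and k is an eigenvalue of A(Σ) with multiplicity exactly b(Σ); in particular, k is an eigenvalue of A(Σ) if and only if Σ has a balanced connected component. -/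
open SimpleGraph
open scoped Classical

set_option linter.unusedSectionVars false

section NoFin
variable {V : Type*} {G : SimpleGraph V} {σ : Sym2 V → ℤ}

def BalP (G : SimpleGraph V) (σ : Sym2 V → ℤ) (c : G.ConnectedComponent) : Prop :=
  ∀ (v : V) (w : G.Walk v v), G.connectedComponentMk v = c → w.IsCycle →
    (w.edges.map σ).prod = 1

lemma rt_mk (c : G.ConnectedComponent) : G.connectedComponentMk (Quot.out c) = c :=
  Quot.out_eq c

noncomputable def walkTo (G : SimpleGraph V) (v : V) :
    G.Walk (Quot.out (G.connectedComponentMk v)) v :=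
  (ConnectedComponent.exact (rt_mk (G.connectedComponentMk v))).some

noncomputable def sgn (G : SimpleGraph V) (σ : Sym2 V → ℤ) (v : V) : ℤ :=
  (((walkTo G v).edges).map σ).prod


section Aux
variable {V : Type*} {G : SimpleGraph V} {σ : Sym2 V → ℤ}

lemma walkProd_pm (hσ : ∀ e ∈ G.edgeSet, σ e = 1 ∨ σ e = -1) {a b : V} (w : G.Walk a b) :
    (w.edges.map σ).prod = 1 ∨ (w.edges.map σ).prod = -1 := by
  induction w with
  | nil => left; simp
  | cons h p ih =>
    rw [Walk.edges_cons, List.map_cons, List.prod_cons]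
    rcases hσ _ (G.mem_edgeSet.mpr h) with h1 | h1 <;> rcases ih with h2 | h2 <;>
      simp [h1, h2]

lemma walk_rel (x : V → ℝ) (hx : ∀ i j, G.Adj i j → x j = (σ s(i,j) : ℝ) * x i)
    {a b : V} (w : G.Walk a b) : x b = ((w.edges.map σ).prod : ℝ) * x a := by
  induction w with
  | nil => simp
  | cons h p ih =>
    rw [Walk.edges_cons, List.map_cons, List.prod_cons]
    rw [ih, hx _ _ h]
    push_cast
    ring

end Aux

section CW
variable {V : Type*} {G : SimpleGraph V} {σ : Sym2 V → ℤ}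


lemma closedWalk_prod_one (hσ : ∀ e ∈ G.edgeSet, σ e = 1 ∨ σ e = -1)
    {c : G.ConnectedComponent}
    (hbal : ∀ (v : V) (w : G.Walk v v), G.connectedComponentMk v = c → w.IsCycle →
      (w.edges.map σ).prod = 1)
    {v : V} (hv : G.connectedComponentMk v = c) (w : G.Walk v v) :
    (w.edges.map σ).prod = 1 := by
  suffices H : ∀ n (v : V), G.connectedComponentMk v = c → ∀ w : G.Walk v v,
      w.length = n → (w.edges.map σ).prod = 1 by
    exact H w.length v hv w rfl
  clear hv w v
  intro n
  induction n using Nat.strong_induction_on with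
  | _ n ih =>
  intro v hv w hw
  by_cases hnd : w.support.tail.Nodup
  · -- nodup internal support: nil, backtrack, or cycle
    cases w with
    | nil => simp
    | @cons _ a _ h p =>
      have hpath : p.IsPath := by
        rw [Walk.isPath_def]
        simpa using hnd
      by_cases he : s(v, a) ∈ p.edges
      · -- backtrack: p must be a single edge back
        have hne : a ≠ v := (G.ne_of_adj h).symm
        have hnn : ¬ p.reverse.Nil := Walk.not_nil_of_ne (fun hh => hne hh.symm)
        rw [Walk.not_nil_iff] at hnn
        obtain ⟨b, h2, q, hq⟩ := hnn
        have hp : p = q.reverse.concat h2.symm := by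
          rw [← Walk.reverse_reverse p, hq, Walk.reverse_cons, ← Walk.concat_eq_append]
        have hsup : v ∉ q.reverse.support ∧ q.reverse.support.Nodup := by
          have := hpath.support_nodup
          rw [hp, Walk.support_concat, List.nodup_append_comm,
            List.singleton_append, List.nodup_cons] at this
          exact this
        rw [hp, Walk.edges_concat, List.concat_eq_append, List.mem_append] at he
        rcases he with he | he
        · exact absurd (Walk.fst_mem_support_of_mem_edges _ he) hsup.1
        · simp only [List.mem_singleton, Sym2.eq_iff] at he
          rcases he with ⟨hvb, hav⟩ | ⟨-, hab⟩
          · exact absurd hav hne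
          · subst hab
            have hqr : q.reverse = Walk.nil := by
              rw [← Walk.isPath_iff_eq_nil, Walk.isPath_def]
              exact hsup.2
            have hq' : q = Walk.nil := by
              rw [← Walk.reverse_reverse q, hqr, Walk.reverse_nil]
            subst hq'
            have hedges : (Walk.cons h p).edges = [s(v, a), s(a, v)] := by
              rw [hp]; simp
            rw [hedges]
            have hsw : s(a, v) = s(v, a) := Sym2.eq_swap
            rw [hsw]
            rcases hσ _ (G.mem_edgeSet.mpr h) with h1 | h1 <;> simp [h1]
      · have hcyc : (Walk.cons h p).IsCycle := (Walk.cons_isCycle_iff p h).mpr ⟨hpath, he⟩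
        exact hbal v _ hv hcyc
  · -- repeated interior vertex: rotate and split
    obtain ⟨u, hu⟩ := List.exists_duplicate_iff_not_nodup.mpr hnd
    have hcnt : 2 ≤ w.support.tail.count u := List.duplicate_iff_two_le_count.mp hu
    have humem : u ∈ w.support := List.mem_of_mem_tail hu.mem
    have hu' : G.connectedComponentMk u = c := by
      rw [← hv]
      exact (ConnectedComponent.sound (w.takeUntil u humem).reachable).symm
    set w₂ := w.rotate u humem with hw₂
    have hcnt₂ : 2 ≤ w₂.support.tail.count u := by
      rwa [((w.support_rotate u humem).perm.count_eq u)]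
    have hedge : (w₂.edges.map σ).prod = (w.edges.map σ).prod :=
      ((w.rotate_edges u humem).perm.map σ).prod_eq
    have hlen : w₂.length = w.length := by
      rw [← Walk.length_edges, ← Walk.length_edges]
      exact (w.rotate_edges u humem).perm.length_eq
    have hnn : ¬ w₂.Nil := by
      rw [Walk.not_nil_iff_lt_length]
      have h1 : w₂.support.tail.count u ≤ w₂.support.tail.length := List.count_le_length
      have h2 : w₂.support.length = w₂.length + 1 := Walk.length_support w₂
      have h3 := List.length_tail (l := w₂.support)
      omega
    rw [Walk.not_nil_iff] at hnn
    obtain ⟨b, h2, q, hq2⟩ := hnn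
    have hcq : 2 ≤ q.support.count u := by
      rwa [hq2, Walk.support_cons, List.tail_cons] at hcnt₂
    have hqu : u ∈ q.support := by
      have : 0 < q.support.count u := by omega
      exact List.count_pos_iff.mp this
    set q1 := q.takeUntil u hqu with hq1d
    set q2 := q.dropUntil u hqu with hq2d
    have hspec : q1.append q2 = q := q.take_spec hqu
    have hcnt1 : q1.support.count u = 1 := q.count_support_takeUntil_eq_one hqu
    have hcnt2' : 1 ≤ q2.support.tail.count u := by
      have hsup : q.support = q1.support ++ q2.support.tail := by
        rw [← hspec, Walk.support_append]
      rw [hsup, List.count_append, hcnt1] at hcq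
      omega
    have hq2len : 1 ≤ q2.length := by
      have hmem : u ∈ q2.support.tail := by
        have : 0 < q2.support.tail.count u := by omega
        exact List.count_pos_iff.mp this
      have hne : q2.support.tail ≠ [] := List.ne_nil_of_mem hmem
      have hl : q2.support.length = q2.length + 1 := Walk.length_support q2
      have := List.length_tail (l := q2.support)
      rcases Nat.eq_zero_or_pos q2.length with h0 | h0
      · rw [h0] at hl
        have : q2.support.tail.length = 0 := by omega
        exact absurd (List.length_eq_zero_iff.mp this) hne
      · omega
    have hql : q.length = q1.length + q2.length := by
      rw [← hspec, Walk.length_append]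
    have hn : n = q1.length + q2.length + 1 := by
      rw [← hw, ← hlen, hq2, Walk.length_cons, hql]
    have hW1 : ((Walk.cons h2 q1).edges.map σ).prod = 1 := by
      refine ih (q1.length + 1) (by omega) u hu' _ ?_
      rw [Walk.length_cons]
    have hW2 : (q2.edges.map σ).prod = 1 := by
      refine ih q2.length (by omega) u hu' q2 rfl
    rw [← hedge, hq2, Walk.edges_cons, ← hspec, Walk.edges_append]
    rw [List.map_cons, List.map_append, List.prod_cons, List.prod_append]
    have hW1' : σ s(u, b) * (q1.edges.map σ).prod = 1 := by
      rw [← hW1, Walk.edges_cons, List.map_cons, List.prod_cons]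
    rw [← mul_assoc, hW1', hW2, one_mul]

end CW

section Fin


variable {V : Type*} [Fintype V] [DecidableEq V] {G : SimpleGraph V} [DecidableRel G.Adj]
  {σ : Sym2 V → ℤ}

lemma signedAdj_mulVec (x : V → ℝ) (i : V) :
    (signedAdj G σ).mulVec x i = ∑ j ∈ G.neighborFinset i, (σ s(i, j) : ℝ) * x j := by
  simp only [Matrix.mulVec, dotProduct, signedAdj, Matrix.of_apply, ite_mul, zero_mul]
  rw [Finset.sum_ite, Finset.sum_const_zero, add_zero, neighborFinset_eq_filter]

lemma sigma_sq (hσ : ∀ e ∈ G.edgeSet, σ e = 1 ∨ σ e = -1) {i j : V} (h : G.Adj i j) :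
    (σ s(i, j) : ℝ) * (σ s(i, j) : ℝ) = 1 := by
  rcases hσ _ (G.mem_edgeSet.mpr h) with h1 | h1 <;> rw [h1] <;> norm_num

lemma sigma_abs (hσ : ∀ e ∈ G.edgeSet, σ e = 1 ∨ σ e = -1) {i j : V} (h : G.Adj i j) :
    |(σ s(i, j) : ℝ)| = 1 := by
  rcases hσ _ (G.mem_edgeSet.mpr h) with h1 | h1 <;> rw [h1] <;> norm_num

lemma mulVec_of_edge_rel (hσ : ∀ e ∈ G.edgeSet, σ e = 1 ∨ σ e = -1) {k : ℕ}
    (hreg : G.IsRegularOfDegree k) {x : V → ℝ}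
    (hx : ∀ i j, G.Adj i j → x j = (σ s(i, j) : ℝ) * x i) :
    (signedAdj G σ).mulVec x = (k : ℝ) • x := by
  funext i
  rw [signedAdj_mulVec]
  have h1 : ∀ j ∈ G.neighborFinset i, (σ s(i, j) : ℝ) * x j = x i := by
    intro j hj
    have hadj : G.Adj i j := (G.mem_neighborFinset i j).mp hj
    rw [hx i j hadj, ← mul_assoc, sigma_sq hσ hadj, one_mul]
  rw [Finset.sum_congr rfl h1, Finset.sum_const, card_neighborFinset_eq_degree, hreg i]
  simp [mul_comm]

lemma edge_rel_of_mulVec (hσ : ∀ e ∈ G.edgeSet, σ e = 1 ∨ σ e = -1) {k : ℕ}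
    (hreg : G.IsRegularOfDegree k) {x : V → ℝ}
    (hx : (signedAdj G σ).mulVec x = (k : ℝ) • x) :
    ∀ i j, G.Adj i j → x j = (σ s(i, j) : ℝ) * x i := by
  intro i j hij
  set c := G.connectedComponentMk i with hc
  set C : Finset V := Finset.univ.filter (fun u => G.connectedComponentMk u = c) with hC
  have hCmem : ∀ u, u ∈ C ↔ G.connectedComponentMk u = c := by
    intro u; simp [hC]
  have hiC : i ∈ C := (hCmem i).mpr rfl
  obtain ⟨i₀, hi₀C, hmax⟩ := C.exists_max_image (fun u => |x u|) ⟨i, hiC⟩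
  set m := |x i₀| with hm
  have hm0 : 0 ≤ m := abs_nonneg _
  have hloc : ∀ u ∈ C, |x u| = m → ∀ j', G.Adj u j' →
      x j' = (σ s(u, j') : ℝ) * x u ∧ |x j'| = m := by
    intro u huC hum j' hadj
    have hsum : ∑ j'' ∈ G.neighborFinset u, (σ s(u, j'') : ℝ) * x j'' = (k : ℝ) * x u := by
      have h0 := congrFun hx u
      rw [signedAdj_mulVec] at h0
      simpa using h0
    have hnbC : ∀ j'' ∈ G.neighborFinset u, j'' ∈ C := by
      intro j'' hj''
      rw [hCmem, ← (hCmem u).mp huC]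
      exact (ConnectedComponent.connectedComponentMk_eq_of_adj
        ((G.mem_neighborFinset u j'').mp hj'')).symm
    have habs : ∀ j'' ∈ G.neighborFinset u, |(σ s(u, j'') : ℝ) * x j''| ≤ m := by
      intro j'' hj''
      rw [abs_mul, sigma_abs hσ ((G.mem_neighborFinset u j'').mp hj''), one_mul]
      exact hmax j'' (hnbC j'' hj'')
    have hcard : (G.neighborFinset u).card = k := hreg u
    have hj'mem : j' ∈ G.neighborFinset u := (G.mem_neighborFinset u j').mpr hadj
    have habs' : ∀ j'', G.Adj u j'' → |x j''| = |(σ s(u, j'') : ℝ) * x j''| := by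
      intro j'' h''
      rw [abs_mul, sigma_abs hσ h'', one_mul]
    rcases le_or_gt 0 (x u) with hpos | hneg
    · have hxu : x u = m := by rw [← hum, abs_of_nonneg hpos]
      have heq : ∀ j'' ∈ G.neighborFinset u, (σ s(u, j'') : ℝ) * x j'' = m := by
        rw [← Finset.sum_eq_sum_iff_of_le (fun j'' hj'' => (abs_le.mp (habs j'' hj'')).2)]
        rw [hsum, Finset.sum_const, hcard, hxu]
        simp [mul_comm]
      have h1 := heq j' hj'mem
      refine ⟨?_, ?_⟩
      · calc x j' = 1 * x j' := (one_mul _).symm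
          _ = ((σ s(u, j') : ℝ) * (σ s(u, j') : ℝ)) * x j' := by rw [sigma_sq hσ hadj]
          _ = (σ s(u, j') : ℝ) * ((σ s(u, j') : ℝ) * x j') := by ring
          _ = (σ s(u, j') : ℝ) * m := by rw [h1]
          _ = (σ s(u, j') : ℝ) * x u := by rw [hxu]
      · rw [habs' j' hadj, h1, abs_of_nonneg hm0]
    · have hxu : x u = -m := by
        rw [← hum, abs_of_neg hneg]; ring
      have heq : ∀ j'' ∈ G.neighborFinset u, -m = (σ s(u, j'') : ℝ) * x j'' := by
        rw [← Finset.sum_eq_sum_iff_of_le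
          (fun j'' hj'' => (abs_le.mp (habs j'' hj'')).1)]
        rw [hsum, Finset.sum_const, hcard, hxu]
        simp [mul_comm]
      have h1 := (heq j' hj'mem).symm
      refine ⟨?_, ?_⟩
      · calc x j' = 1 * x j' := (one_mul _).symm
          _ = ((σ s(u, j') : ℝ) * (σ s(u, j') : ℝ)) * x j' := by rw [sigma_sq hσ hadj]
          _ = (σ s(u, j') : ℝ) * ((σ s(u, j') : ℝ) * x j') := by ring
          _ = (σ s(u, j') : ℝ) * (-m) := by rw [h1]
          _ = (σ s(u, j') : ℝ) * x u := by rw [hxu]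
      · rw [habs' j' hadj, h1, abs_neg, abs_of_nonneg hm0]
  have hprop : ∀ a b (w : G.Walk a b), a ∈ C → |x a| = m → b ∈ C ∧ |x b| = m := by
    intro a b w
    induction w with
    | nil => exact fun h1 h2 => ⟨h1, h2⟩
    | @cons a a' b h p ih =>
      intro haC ham
      have h1 := hloc a haC ham a' h
      have ha'C : a' ∈ C := by
        rw [hCmem, ← (hCmem a).mp haC]
        exact (ConnectedComponent.connectedComponentMk_eq_of_adj h).symm
      exact ih ha'C h1.2
  have hreach : G.Reachable i₀ i :=
    ConnectedComponent.exact (((hCmem i₀).mp hi₀C).trans hc)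
  obtain ⟨w⟩ := hreach
  have hi : |x i| = m := (hprop i₀ i w hi₀C rfl).2
  exact (hloc i hiC hi j hij).1

end Fin
end NoFin

section Sgn
variable {V : Type*} {G : SimpleGraph V} {σ : Sym2 V → ℤ}

lemma sgn_pm (hσ : ∀ e ∈ G.edgeSet, σ e = 1 ∨ σ e = -1) (v : V) :
    sgn G σ v = 1 ∨ sgn G σ v = -1 :=
  walkProd_pm hσ _

lemma sgn_rt (hσ : ∀ e ∈ G.edgeSet, σ e = 1 ∨ σ e = -1) {c : G.ConnectedComponent}
    (hbal : BalP G σ c) : sgn G σ (Quot.out c) = 1 := by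
  have h : Quot.out (G.connectedComponentMk (Quot.out c)) = Quot.out c :=
    congrArg Quot.out (rt_mk c)
  have hcw := closedWalk_prod_one hσ hbal (rt_mk c) ((walkTo G (Quot.out c)).copy h rfl)
  rwa [Walk.edges_copy] at hcw

lemma sgn_edge (hσ : ∀ e ∈ G.edgeSet, σ e = 1 ∨ σ e = -1) {i j : V} (hij : G.Adj i j)
    (hbal : BalP G σ (G.connectedComponentMk i)) :
    sgn G σ j = σ s(i, j) * sgn G σ i := by
  have hmk : G.connectedComponentMk j = G.connectedComponentMk i :=
    (ConnectedComponent.connectedComponentMk_eq_of_adj hij).symm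
  have h2 : Quot.out (G.connectedComponentMk j) = Quot.out (G.connectedComponentMk i) :=
    congrArg Quot.out hmk
  set W := (walkTo G i).append ((Walk.cons hij Walk.nil).append
    (((walkTo G j).copy h2 rfl).reverse)) with hW
  have hprod := closedWalk_prod_one hσ hbal (rt_mk (G.connectedComponentMk i)) W
  rw [hW, Walk.edges_append, Walk.edges_append, Walk.edges_reverse, Walk.edges_copy,
    Walk.edges_cons, Walk.edges_nil, List.map_append, List.map_append, List.prod_append,
    List.prod_append, List.map_reverse, List.prod_reverse] at hprod
  simp only [List.map_cons, List.map_nil, List.prod_cons, List.prod_nil, mul_one] at hprod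
  have h1 := sgn_pm hσ i
  have h2' := sgn_pm hσ j
  have h3 := hσ _ (G.mem_edgeSet.mpr hij)
  unfold sgn at *
  rcases h1 with h1 | h1 <;> rcases h2' with h2' | h2' <;> rcases h3 with h3 | h3 <;>
    rw [h1, h2', h3] at hprod ⊢ <;> revert hprod <;> norm_num

end Sgn

section Main
variable {V : Type*} [Fintype V] [DecidableEq V] {G : SimpleGraph V} [DecidableRel G.Adj]
  {σ : Sym2 V → ℤ}

lemma eigenvalue_bound (hσ : ∀ e ∈ G.edgeSet, σ e = 1 ∨ σ e = -1) {k : ℕ}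
    (hreg : G.IsRegularOfDegree k) {μ : ℝ}
    (h : Module.End.HasEigenvalue (signedAdj G σ).mulVecLin μ) : μ ≤ k := by
  obtain ⟨x, hx⟩ := h.exists_hasEigenvector
  have hxeq : (signedAdj G σ).mulVec x = μ • x := by
    have := hx.apply_eq_smul
    rwa [Matrix.mulVecLin_apply] at this
  obtain ⟨v, hv⟩ : ∃ v, x v ≠ 0 := Function.ne_iff.mp hx.right
  have hne : Nonempty V := ⟨v⟩
  obtain ⟨i₀, -, hmax⟩ := Finset.univ.exists_max_image (fun u => |x u|) Finset.univ_nonempty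
  have hm0 : 0 < |x i₀| := lt_of_lt_of_le (abs_pos.mpr hv) (hmax v (Finset.mem_univ v))
  have heq : μ * x i₀ = ∑ j ∈ G.neighborFinset i₀, (σ s(i₀, j) : ℝ) * x j := by
    have h0 := congrFun hxeq i₀
    rw [signedAdj_mulVec] at h0
    simpa using h0.symm
  have hb : |μ| * |x i₀| ≤ (k : ℝ) * |x i₀| := by
    rw [← abs_mul, heq]
    calc |∑ j ∈ G.neighborFinset i₀, (σ s(i₀, j) : ℝ) * x j|
        ≤ ∑ j ∈ G.neighborFinset i₀, |(σ s(i₀, j) : ℝ) * x j| :=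
          Finset.abs_sum_le_sum_abs _ _
      _ ≤ ∑ _j ∈ G.neighborFinset i₀, |x i₀| := by
          refine Finset.sum_le_sum fun j hj => ?_
          rw [abs_mul, sigma_abs hσ ((G.mem_neighborFinset i₀ j).mp hj), one_mul]
          exact hmax j (Finset.mem_univ j)
      _ = (k : ℝ) * |x i₀| := by
          rw [Finset.sum_const, card_neighborFinset_eq_degree, hreg i₀, nsmul_eq_mul]
  have habs : |μ| ≤ (k : ℝ) := le_of_mul_le_mul_right (by linarith) hm0
  exact le_trans (le_abs_self μ) habs

lemma mem_eigen_iff {k : ℕ} (x : V → ℝ) :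
    x ∈ Module.End.eigenspace (signedAdj G σ).mulVecLin (k : ℝ) ↔
      (signedAdj G σ).mulVec x = (k : ℝ) • x := by
  rw [Module.End.mem_eigenspace_iff, Matrix.mulVecLin_apply]

noncomputable def psiFun (G : SimpleGraph V) (σ : Sym2 V → ℤ)
    (t : {c : G.ConnectedComponent // BalP G σ c} → ℝ) : V → ℝ :=
  fun v => if h : BalP G σ (G.connectedComponentMk v) then
    (sgn G σ v : ℝ) * t ⟨G.connectedComponentMk v, h⟩ else 0

lemma psiFun_edge (hσ : ∀ e ∈ G.edgeSet, σ e = 1 ∨ σ e = -1)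
    (t : {c : G.ConnectedComponent // BalP G σ c} → ℝ) :
    ∀ i j, G.Adj i j → psiFun G σ t j = (σ s(i, j) : ℝ) * psiFun G σ t i := by
  intro i j hij
  have hmk : G.connectedComponentMk j = G.connectedComponentMk i :=
    (ConnectedComponent.connectedComponentMk_eq_of_adj hij).symm
  unfold psiFun
  by_cases h : BalP G σ (G.connectedComponentMk i)
  · have hj : BalP G σ (G.connectedComponentMk j) := by rw [hmk]; exact h
    rw [dif_pos hj, dif_pos h]
    have hsub : (⟨G.connectedComponentMk j, hj⟩ : {c // BalP G σ c}) =
        ⟨G.connectedComponentMk i, h⟩ := Subtype.ext hmk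
    rw [hsub, sgn_edge hσ hij h]
    push_cast
    ring
  · have hj : ¬ BalP G σ (G.connectedComponentMk j) := by rw [hmk]; exact h
    rw [dif_neg hj, dif_neg h, mul_zero]

noncomputable def eigenEquiv (hσ : ∀ e ∈ G.edgeSet, σ e = 1 ∨ σ e = -1) {k : ℕ}
    (hreg : G.IsRegularOfDegree k) :
    (Module.End.eigenspace (signedAdj G σ).mulVecLin (k : ℝ)) ≃ₗ[ℝ]
      ({c : G.ConnectedComponent // BalP G σ c} → ℝ) :=
  LinearEquiv.ofLinear
    { toFun := fun x c => (x : V → ℝ) (Quot.out c.1)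
      map_add' := fun _ _ => rfl
      map_smul' := fun _ _ => rfl }
    { toFun := fun t => ⟨psiFun G σ t,
        (mem_eigen_iff _).mpr (mulVec_of_edge_rel hσ hreg (psiFun_edge hσ t))⟩
      map_add' := by
        intro s t
        apply Subtype.ext
        funext v
        simp only [psiFun, Submodule.coe_add, Pi.add_apply]
        by_cases h : BalP G σ (G.connectedComponentMk v)
        · rw [dif_pos h, dif_pos h, dif_pos h]; ring
        · rw [dif_neg h, dif_neg h, dif_neg h, add_zero]
      map_smul' := by
        intro a t
        apply Subtype.ext
        funext v
        simp only [psiFun, SetLike.val_smul, Pi.smul_apply, RingHom.id_apply, smul_eq_mul]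
        by_cases h : BalP G σ (G.connectedComponentMk v)
        · rw [dif_pos h, dif_pos h]; ring
        · rw [dif_neg h, dif_neg h, mul_zero] }
    (by
      apply LinearMap.ext
      intro t
      funext c
      simp only [LinearMap.coe_comp, Function.comp_apply, LinearMap.coe_mk, AddHom.coe_mk,
        LinearMap.id_apply]
      have hb : BalP G σ (G.connectedComponentMk (Quot.out c.1)) := by
        rw [rt_mk]; exact c.2
      show psiFun G σ t (Quot.out c.1) = t c
      unfold psiFun
      rw [dif_pos hb]
      have hsub : (⟨G.connectedComponentMk (Quot.out c.1), hb⟩ : {c // BalP G σ c}) = c := by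
        apply Subtype.ext
        exact rt_mk c.1
      rw [hsub, sgn_rt hσ c.2]
      norm_num)
    (by
      apply LinearMap.ext
      intro x
      apply Subtype.ext
      funext v
      simp only [LinearMap.coe_comp, Function.comp_apply, LinearMap.coe_mk, AddHom.coe_mk,
        LinearMap.id_apply]
      have hrel := edge_rel_of_mulVec hσ hreg ((mem_eigen_iff _).mp x.2)
      show psiFun G σ _ v = (x : V → ℝ) v
      unfold psiFun
      by_cases h : BalP G σ (G.connectedComponentMk v)
      · rw [dif_pos h]
        have := walk_rel (x : V → ℝ) hrel (walkTo G v)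
        rw [this]
        rfl
      · rw [dif_neg h]
        unfold BalP at h
        push_neg at h
        obtain ⟨u, w, hu, hcyc, hne⟩ := h
        have hm1 : (w.edges.map σ).prod = -1 := by
          rcases walkProd_pm hσ w with h1 | h1
          · exact absurd h1 hne
          · exact h1
        have hxu : (x : V → ℝ) u = 0 := by
          have hw := walk_rel (x : V → ℝ) hrel w
          rw [hm1] at hw
          push_cast at hw
          linarith
        obtain ⟨p⟩ := ConnectedComponent.exact hu
        have hv := walk_rel (x : V → ℝ) hrel p
        rw [hxu, mul_zero] at hv
        exact hv.symm)

end Main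


/-- If the underlying graph of `Σ` is regular of degree `k`, then every eigenvalue of
`A(Σ)` is at most `k`, the eigenvalue `k` has multiplicity exactly `b(Σ)` (the dimension
of its eigenspace), and in particular `k` is an eigenvalue of `A(Σ)` iff `Σ` has a
balanced connected component. -/
theorem regular_eigenvalue_bound {V : Type*} [Fintype V] [DecidableEq V]
    (G : SimpleGraph V) [DecidableRel G.Adj]
    (σ : Sym2 V → ℤ) (hσ : ∀ e ∈ G.edgeSet, σ e = 1 ∨ σ e = -1)
    (k : ℕ) (hreg : G.IsRegularOfDegree k) :
    (∀ μ : ℝ, Module.End.HasEigenvalue (signedAdj G σ).mulVecLin μ → μ ≤ k) ∧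
    Module.finrank ℝ (Module.End.eigenspace (signedAdj G σ).mulVecLin (k : ℝ)) =
      numBalancedComponents G σ ∧
    (Module.End.HasEigenvalue (signedAdj G σ).mulVecLin (k : ℝ) ↔
      ∃ c : G.ConnectedComponent,
        ∀ (v : V) (w : G.Walk v v), G.connectedComponentMk v = c → w.IsCycle →
          (w.edges.map σ).prod = 1) := by
  refine ⟨fun μ h => eigenvalue_bound hσ hreg h, ?_, ?_⟩
  · have e := eigenEquiv (G := G) (σ := σ) hσ hreg
    haveI : Fintype {c : G.ConnectedComponent // BalP G σ c} := Fintype.ofFinite _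
    rw [e.finrank_eq, Module.finrank_pi, ← Nat.card_eq_fintype_card]
    rfl
  · constructor
    · intro h
      obtain ⟨x, hx⟩ := h.exists_hasEigenvector
      by_contra hno
      push_neg at hno
      haveI hie : IsEmpty {c : G.ConnectedComponent // BalP G σ c} := by
        constructor
        rintro ⟨c, hc⟩
        obtain ⟨v, w, hv, hcyc, hne⟩ := hno c
        exact hne (hc v w hv hcyc)
      haveI : Subsingleton ({c : G.ConnectedComponent // BalP G σ c} → ℝ) :=
        ⟨fun f g => funext fun c => isEmptyElim c⟩
      have e := eigenEquiv (G := G) (σ := σ) hσ hreg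
      have h0 : (⟨x, hx.1⟩ : Module.End.eigenspace (signedAdj G σ).mulVecLin (k : ℝ)) = 0 :=
        e.injective (Subsingleton.elim _ _)
      exact hx.2 (by simpa using congrArg Subtype.val h0)
    · rintro ⟨c, hc⟩
      have e := eigenEquiv (G := G) (σ := σ) hσ hreg
      set y := e.symm (fun _ => 1) with hy
      refine Module.End.hasEigenvalue_of_hasEigenvector (x := (y : V → ℝ)) ⟨y.2, ?_⟩
      intro h0
      have h1 : y = 0 := Subtype.ext h0
      have h2 := congrFun (e.apply_symm_apply (fun _ => (1 : ℝ)))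
        (⟨c, hc⟩ : {c : G.ConnectedComponent // BalP G σ c})
      rw [← hy, h1] at h2
      have h3 : e 0 = 0 := e.map_zero
      rw [h3] at h2
      simp at h2
end
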